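/- arXiv:2103.00664 — 10 statements merged into one kernel-verified Lean document; each statement's English description precedes it below -/
import Mathlib

section
/- Let q be a prime power, d a positive divisor of q−1, ω a primitive root of F_q, m := (q−1)/d, and C the index d subgroup of F_qˣ. The map β : C × {0,…,d−1} → F_qˣ, (c,i) ↦ c·ω^i, is a bijection, and for every permutation σ of C × {0,…,d−1} the following are equivalent: (i) there exist a permutation ψ of {0,…,d−1}, integers s_0,…,s_{d−1} each coprime to m, and elements b_0,…,b_{d−1} ∈ C such that σ(c,i) = (b_{ψ(i)}·c^{s_{ψ(i)}}, ψ(i)) for all c ∈ C and all i ∈ {0,…,d−1}; (ii) there exist a tuple a = (a_0,…,a_{d−1}) ∈ F_q^d and a tuple r = (r_0,…,r_{d−1}) of integers with 1 ≤ r_i ≤ m such that f_ω(a,r) is an index d generalized cyclotomic permutation of F_q and β(σ(c,i)) = f_ω(a,r)(β(c,i)) for all c ∈ C and all i. In other words, conjugation by β maps the imprimitive wreath product Hol(C) ≀ Sym(d) acting on C × {0,…,d−1} exactly onto the group of restrictions to F_qˣ of the index d generalized cyclotomic permutations of F_q. -/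
/-- `IsGCM ω d m a r f` says that `f : F → F` is the index `d` generalized cyclotomic
mapping `f_ω(a,r)` of the finite field `F`: `f 0 = 0`, and `f x = a i * x ^ r i` whenever
the unit `x` lies in the coset `C_i = ω^i · C`, where `C = {x : Fˣ | x ^ m = 1}` is the
index `d` subgroup of `Fˣ` (membership of `x` in `C_i` being expressed by
`(x * (ω^i)⁻¹) ^ m = 1`). -/
def IsGCM {F : Type*} [Field F] (ω : Fˣ) (d m : ℕ)
    (a : Fin d → F) (r : Fin d → ℕ) (f : F → F) : Prop :=
  f 0 = 0 ∧ ∀ (x : Fˣ) (i : Fin d), (x * (ω ^ (i : ℕ))⁻¹) ^ m = 1 →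
    f (x : F) = a i * (x : F) ^ (r i)

private lemma pow_int_congr {G : Type*} [Group G] (c : G) {m : ℕ} (hc : c ^ m = 1)
    {x y : ℤ} (h : x ≡ y [ZMOD (m : ℤ)]) : c ^ x = c ^ y := by
  rw [zpow_eq_zpow_iff_modEq]
  exact h.of_dvd (Int.natCast_dvd_natCast.mpr (orderOf_dvd_of_pow_eq_one hc))

/-- Theorem 1.1 (wreath product form vs. cyclotomic form): the map
`β : C × {0,…,d−1} → Fˣ, (c,i) ↦ c·ω^i` is a bijection, and a permutation `σ` of
`C × {0,…,d−1}` is an element of the imprimitive wreath product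
`Hol(C) ≀ Sym(d)` (i.e. has the form `(c,i) ↦ (b_{ψ(i)}·c^{s_{ψ(i)}}, ψ(i))`) if and only
if it corresponds, under conjugation by `β`, to (the restriction to `Fˣ` of) an index `d`
generalized cyclotomic permutation of `F`. -/
theorem stmt0 {F : Type*} [Field F] [Fintype F] (ω : Fˣ)
    (hω : ∀ x : Fˣ, x ∈ Subgroup.zpowers ω)
    (d m : ℕ) (hd : 0 < d) (hdm : d * m = Fintype.card F - 1) :
    Function.Bijective
      (fun ci : {x : Fˣ // x ^ m = 1} × Fin d => ((ci.1 : Fˣ) * ω ^ (ci.2 : ℕ))) ∧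
    ∀ σ : Equiv.Perm ({x : Fˣ // x ^ m = 1} × Fin d),
      ((∃ (ψ : Equiv.Perm (Fin d)) (s : Fin d → ℤ) (b : Fin d → {x : Fˣ // x ^ m = 1}),
          (∀ i, Int.gcd (s i) (m : ℤ) = 1) ∧
          ∀ (c : {x : Fˣ // x ^ m = 1}) (i : Fin d),
            ((σ (c, i)).1 : Fˣ) = (b (ψ i) : Fˣ) * (c : Fˣ) ^ (s (ψ i)) ∧
            (σ (c, i)).2 = ψ i)
       ↔
       (∃ (a : Fin d → F) (r : Fin d → ℕ), (∀ i, 1 ≤ r i ∧ r i ≤ m) ∧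
          ∃ f : F → F, IsGCM ω d m a r f ∧ Function.Bijective f ∧
            ∀ (c : {x : Fˣ // x ^ m = 1}) (i : Fin d),
              ((((σ (c, i)).1 : Fˣ) * ω ^ (((σ (c, i)).2 : Fin d) : ℕ) : Fˣ) : F)
                = f ((((c : Fˣ) * ω ^ (i : ℕ) : Fˣ)) : F))) := by
  classical
  have hcard : Fintype.card Fˣ = d * m := by
    rw [Fintype.card_units, ← hdm]
  have hord : orderOf ω = d * m := by
    rw [orderOf_eq_card_of_forall_mem_zpowers hω, Nat.card_eq_fintype_card, hcard]
  have hm : 0 < m := by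
    rcases Nat.eq_zero_or_pos m with h | h
    · exfalso
      have hpos : 0 < Fintype.card Fˣ := Fintype.card_pos
      rw [hcard, h, mul_zero] at hpos
      exact lt_irrefl 0 hpos
    · exact h
  have homega : ω ^ (d * m) = 1 := by rw [← hord]; exact pow_orderOf_eq_one ω
  -- injectivity of β
  have hβinj : Function.Injective
      (fun ci : {x : Fˣ // x ^ m = 1} × Fin d => ((ci.1 : Fˣ) * ω ^ (ci.2 : ℕ))) := by
    rintro ⟨⟨c1, hc1⟩, i1⟩ ⟨⟨c2, hc2⟩, i2⟩ h
    simp only at h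
    have hpow : ω ^ ((i1 : ℕ) * m) = ω ^ ((i2 : ℕ) * m) := by
      have h1 := congrArg (· ^ m) h
      simp only [mul_pow, hc1, hc2, one_mul, ← pow_mul] at h1
      exact h1
    have hmod : (i1 : ℕ) * m ≡ (i2 : ℕ) * m [MOD d * m] := by
      rwa [pow_eq_pow_iff_modEq, hord] at hpow
    have hmod2 : (i1 : ℕ) ≡ (i2 : ℕ) [MOD d] :=
      (Nat.ModEq.mul_right_cancel_iff' hm.ne').mp hmod
    have hi : i1 = i2 := by
      apply Fin.ext
      rwa [Nat.ModEq, Nat.mod_eq_of_lt i1.isLt, Nat.mod_eq_of_lt i2.isLt] at hmod2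
    subst hi
    have hc : c1 = c2 := mul_right_cancel h
    simp [hc]
  -- surjectivity of β
  have hβsurj : Function.Surjective
      (fun ci : {x : Fˣ // x ^ m = 1} × Fin d => ((ci.1 : Fˣ) * ω ^ (ci.2 : ℕ))) := by
    intro x
    obtain ⟨k, hk⟩ := hω x
    have hdm0 : (0 : ℤ) < ((d * m : ℕ) : ℤ) := by positivity
    set k' : ℕ := (k % ((d * m : ℕ) : ℤ)).toNat with hk'def
    have hk'' : ω ^ (k' : ℤ) = x := by
      rw [hk'def, Int.toNat_of_nonneg (Int.emod_nonneg k hdm0.ne')]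
      rw [← hk]
      exact pow_int_congr ω homega (Int.emod_emod_of_dvd k dvd_rfl)
    refine ⟨⟨⟨ω ^ (d * (k' / d)), ?_⟩, ⟨k' % d, Nat.mod_lt _ hd⟩⟩, ?_⟩
    · rw [← pow_mul]
      have : d * (k' / d) * m = d * m * (k' / d) := by ring
      rw [this, pow_mul, homega, one_pow]
    · simp only
      rw [← pow_add]
      have : d * (k' / d) + k' % d = k' := Nat.div_add_mod k' d
      rw [this, ← zpow_natCast, hk'']
  have hβ : Function.Bijective
      (fun ci : {x : Fˣ // x ^ m = 1} × Fin d => ((ci.1 : Fˣ) * ω ^ (ci.2 : ℕ))) :=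
    ⟨hβinj, hβsurj⟩
  refine ⟨hβ, fun σ => ?_⟩
  set e := Equiv.ofBijective _ hβ with he
  have he_app : ∀ ci : {x : Fˣ // x ^ m = 1} × Fin d,
      e ci = (ci.1 : Fˣ) * ω ^ (ci.2 : ℕ) := fun ci => rfl
  constructor
  · -- forward direction
    rintro ⟨ψ, s, b, hs, hσ⟩
    have hmZ : ((m : ℤ)) ≠ 0 := Int.natCast_ne_zero.mpr hm.ne'
    set r : Fin d → ℕ :=
      fun i => if (s (ψ i)) % (m : ℤ) = 0 then m else ((s (ψ i)) % (m : ℤ)).toNat with hrdef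
    have hrm : ∀ i, ((r i : ℤ)) ≡ s (ψ i) [ZMOD (m : ℤ)] := by
      intro i
      by_cases h : (s (ψ i)) % (m : ℤ) = 0
      · simp only [hrdef, if_pos h]
        show (m : ℤ) % m = s (ψ i) % m
        simp [Int.emod_self, h]
      · simp only [hrdef, if_neg h]
        rw [Int.toNat_of_nonneg (Int.emod_nonneg _ hmZ)]
        exact Int.emod_emod_of_dvd _ dvd_rfl
    have hrb : ∀ i, 1 ≤ r i ∧ r i ≤ m := by
      intro i
      have h1 := Int.emod_nonneg (s (ψ i)) hmZ
      have h2 := Int.emod_lt_of_pos (s (ψ i)) (by positivity : (0:ℤ) < (m:ℤ))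
      by_cases h : (s (ψ i)) % (m : ℤ) = 0
      · simp only [hrdef, if_pos h]
        omega
      · simp only [hrdef, if_neg h]
        omega
    refine ⟨fun i => (((b (ψ i) : Fˣ) * ω ^ ((ψ i : ℕ)) * (ω ^ ((i : ℕ) * r i))⁻¹ : Fˣ) : F),
      r, hrb, fun x => if hx : x = 0 then 0
        else ((e (σ (e.symm (Units.mk0 x hx)))) : F), ⟨?_, ?_⟩, ⟨?_, ?_⟩, ?_⟩
    · simp
    · -- IsGCM main condition
      intro x i hx
      dsimp only
      rw [dif_neg (Units.ne_zero x), Units.mk0_val]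
      have hsymm : e.symm (x : Fˣ) = (⟨x * (ω ^ (i : ℕ))⁻¹, hx⟩, i) := by
        rw [Equiv.symm_apply_eq, he_app]
        exact (inv_mul_cancel_right x _).symm
      rw [hsymm]
      obtain ⟨h1, h2⟩ := hσ ⟨x * (ω ^ (i : ℕ))⁻¹, hx⟩ i
      rw [he_app, h1, h2]
      have hcz : ((x * (ω ^ (i : ℕ))⁻¹ : Fˣ)) ^ (s (ψ i))
          = (x * (ω ^ (i : ℕ))⁻¹) ^ ((r i : ℕ)) := by
        rw [← zpow_natCast]
        exact pow_int_congr _ hx (hrm i).symm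
      rw [hcz]
      have hω0 : ((ω : F)) ≠ 0 := Units.ne_zero ω
      push_cast [Units.val_mul, Units.val_pow_eq_pow_val, Units.val_inv_eq_inv_val]
      field_simp
      rw [div_pow, ← pow_mul, div_mul_cancel₀ _ (pow_ne_zero _ hω0)]
    · -- injective
      intro x y hxy
      dsimp only at hxy
      by_cases hx : x = 0 <;> by_cases hy : y = 0
      · rw [hx, hy]
      · rw [dif_pos hx, dif_neg hy] at hxy
        exact absurd hxy.symm (Units.ne_zero _)
      · rw [dif_neg hx, dif_pos hy] at hxy
        exact absurd hxy (Units.ne_zero _)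
      · rw [dif_neg hx, dif_neg hy] at hxy
        have h3 := e.symm.injective (σ.injective (e.injective (Units.ext hxy)))
        have := congrArg Units.val h3
        simpa using this
    · -- surjective
      intro y
      by_cases hy : y = 0
      · exact ⟨0, by dsimp only; rw [dif_pos rfl, hy]⟩
      · refine ⟨((e (σ.symm (e.symm (Units.mk0 y hy)))) : F), ?_⟩
        dsimp only
        rw [dif_neg (Units.ne_zero _), Units.mk0_val, Equiv.symm_apply_apply,
          Equiv.apply_symm_apply, Equiv.apply_symm_apply, Units.val_mk0]
    · -- compatibility
      intro c i
      show (e (σ (c, i)) : F) = _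
      dsimp only
      rw [dif_neg (Units.ne_zero _), Units.mk0_val]
      have hsymm : e.symm ((c : Fˣ) * ω ^ (i : ℕ)) = (c, i) := e.symm_apply_eq.mpr rfl
      rw [hsymm]
  · -- backward direction
    rintro ⟨a, r, hr, f, ⟨hf0, hfC⟩, hfbij, hcomp⟩
    have hmem : ∀ (c : {x : Fˣ // x ^ m = 1}) (i : Fin d),
        (((c : Fˣ) * ω ^ (i : ℕ)) * (ω ^ (i : ℕ))⁻¹) ^ m = 1 := by
      intro c i
      rw [mul_inv_cancel_right]
      exact c.2
    have key0 : ∀ (c : {x : Fˣ // x ^ m = 1}) (i : Fin d),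
        ((e (σ (c, i)) : Fˣ) : F) = a i * (((c : Fˣ) * ω ^ (i : ℕ) : Fˣ) : F) ^ r i := by
      intro c i
      have h1 := hcomp c i
      rw [hfC ((c : Fˣ) * ω ^ (i : ℕ)) i (hmem c i)] at h1
      exact h1
    have ha : ∀ i, a i ≠ 0 := by
      intro i h
      have h2 := key0 ⟨1, one_pow m⟩ i
      rw [h, zero_mul] at h2
      exact Units.ne_zero _ h2
    set A : Fin d → Fˣ := fun i => Units.mk0 (a i) (ha i) * ω ^ ((i : ℕ) * r i) with hA
    set b' : Fin d → {x : Fˣ // x ^ m = 1} := fun i => (e.symm (A i)).1 with hb'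
    set ψ' : Fin d → Fin d := fun i => (e.symm (A i)).2 with hψ'
    have heA : ∀ i, ((b' i : Fˣ)) * ω ^ ((ψ' i : ℕ)) = A i := by
      intro i
      exact (he_app _).symm.trans (e.apply_symm_apply (A i))
    have hpowC : ∀ (c : {x : Fˣ // x ^ m = 1}) (n : ℕ), ((c : Fˣ) ^ n) ^ m = 1 := by
      intro c n
      rw [← pow_mul, mul_comm, pow_mul, c.2, one_pow]
    have key : ∀ (c : {x : Fˣ // x ^ m = 1}) (i : Fin d),
        σ (c, i) = (⟨(b' i : Fˣ) * (c : Fˣ) ^ r i, by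
            rw [mul_pow, (b' i).2, one_mul]; exact hpowC c (r i)⟩, ψ' i) := by
      intro c i
      apply e.injective
      apply Units.ext
      rw [key0 c i, he_app]
      have h5 := congrArg Units.val (heA i)
      simp only [hA, Units.val_mul, Units.val_pow_eq_pow_val, Units.val_mk0] at h5 ⊢
      linear_combination (-(((c : Fˣ) : F) ^ (r i))) * h5
    have hψsurj : Function.Surjective ψ' := by
      intro j
      obtain ⟨⟨c, i⟩, hci⟩ := σ.surjective (⟨1, one_pow m⟩, j)
      exact ⟨i, (congrArg Prod.snd ((hci.symm).trans (key c i))).symm⟩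
    have hψbij := Finite.surjective_iff_bijective.mp hψsurj
    refine ⟨Equiv.ofBijective ψ' hψbij, fun j => (r ((Equiv.ofBijective ψ' hψbij).symm j) : ℤ),
      fun j => b' ((Equiv.ofBijective ψ' hψbij).symm j), ?_, ?_⟩
    · -- gcd condition
      intro j
      dsimp only
      rw [Int.gcd_natCast_natCast]
      set i := (Equiv.ofBijective ψ' hψbij).symm j with hi
      by_contra hg
      have hgm : Nat.gcd (r i) m ∣ m := Nat.gcd_dvd_right _ _
      have hgr : Nat.gcd (r i) m ∣ r i := Nat.gcd_dvd_left _ _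
      have hg0 : 0 < Nat.gcd (r i) m := Nat.gcd_pos_of_pos_right _ hm
      have hg2 : 2 ≤ Nat.gcd (r i) m := by omega
      set g := Nat.gcd (r i) m with hgdef
      set t := m / g with ht
      have ht0 : 0 < t := Nat.div_pos (Nat.le_of_dvd hm hgm) hg0
      have htm : t < m := Nat.div_lt_self hm hg2
      have homd : (ω ^ d) ^ m = 1 := by
        rw [← pow_mul]
        exact homega
      have hod : orderOf (ω ^ d) = m := by
        rw [orderOf_pow, hord, Nat.gcd_eq_right (dvd_mul_right d m)]
        exact Nat.mul_div_cancel_left m hd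
      have hc0m : ((ω ^ d) ^ t) ^ m = 1 := by
        rw [← pow_mul, mul_comm, pow_mul, homd, one_pow]
      have hc0ne : (ω ^ d) ^ t ≠ 1 := pow_ne_one_of_lt_orderOf ht0.ne' (hod ▸ htm)
      have hc0r : ((ω ^ d) ^ t) ^ (r i) = 1 := by
        obtain ⟨u, hu⟩ := hgr
        rw [← pow_mul]
        have h6 : t * (r i) = m * u := by
          rw [hu, ht, ← mul_assoc, Nat.div_mul_cancel hgm]
        rw [h6, pow_mul, homd, one_pow]
      have heq : σ (⟨(ω ^ d) ^ t, hc0m⟩, i) = σ (⟨1, one_pow m⟩, i) := by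
        rw [key, key]
        exact Prod.ext (Subtype.ext (show ((b' i : Fˣ)) * ((ω ^ d) ^ t) ^ (r i)
          = ((b' i : Fˣ)) * (1 : Fˣ) ^ (r i) by rw [hc0r, one_pow])) rfl
      have h7 := σ.injective heq
      exact hc0ne (congrArg (fun p => ((p.1 : Fˣ) : Fˣ)) h7)
    · intro c i
      dsimp only
      rw [Equiv.symm_apply_apply]
      constructor
      · rw [key c i, zpow_natCast]
      · rw [key c i]
        rfl
end

section
/- If f and g are index d generalized cyclotomic permutations of F_q (for the same prime power q, divisor d of q−1 and primitive root ω), then the composite g∘f is again an index d generalized cyclotomic permutation of F_q, and the inverse function f⁻¹ is again an index d generalized cyclotomic permutation of F_q; that is, the index d generalized cyclotomic permutations of F_q form a group under composition. -/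
/-- `f` is an index `d` generalized cyclotomic permutation of `F`: it is a generalized
cyclotomic mapping `f_ω(a,r)` (with all exponents in `{1,…,m}`) that is bijective. -/
def IsGCP {F : Type*} [Field F] (ω : Fˣ) (d m : ℕ) (f : F → F) : Prop :=
  ∃ (a : Fin d → F) (r : Fin d → ℕ),
    (∀ i, 1 ≤ r i ∧ r i ≤ m) ∧ IsGCM ω d m a r f ∧ Function.Bijective f

section Aux
variable {F : Type*} [Field F] [Fintype F] {ω : Fˣ} {d m : ℕ}

lemma aux_ord (hω : ∀ x : Fˣ, x ∈ Subgroup.zpowers ω)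
    (hdm : d * m = Fintype.card F - 1) : orderOf ω = d * m := by
  rw [orderOf_eq_card_of_forall_mem_zpowers hω, Nat.card_units, Nat.card_eq_fintype_card, hdm]

lemma aux_m_pos (hdm : d * m = Fintype.card F - 1) : 0 < m := by
  have h1 : (1:ℕ) < Fintype.card F := Fintype.one_lt_card
  rcases Nat.eq_zero_or_pos m with h | h
  · subst h; omega
  · exact h

lemma aux_exists_ind (hω : ∀ x : Fˣ, x ∈ Subgroup.zpowers ω) (hd : 0 < d)
    (hdm : d * m = Fintype.card F - 1) (x : Fˣ) :
    ∃ i : Fin d, (x * (ω ^ (i : ℕ))⁻¹) ^ m = 1 := by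
  obtain ⟨k, hk⟩ := hω x
  have hd' : (0:ℤ) < d := by exact_mod_cast hd
  refine ⟨⟨(k % d).toNat, ?_⟩, ?_⟩
  · have := Int.emod_lt_of_pos k hd'
    have := Int.emod_nonneg k (by omega : (d:ℤ) ≠ 0)
    omega
  · have hnn : (0:ℤ) ≤ k % d := Int.emod_nonneg k (by positivity)
    have hcast : (((k % d).toNat : ℕ) : ℤ) = k % d := Int.toNat_of_nonneg hnn
    have : (x * (ω ^ ((k % d).toNat))⁻¹) = ω ^ (k - k % d) := by
      rw [← hk, ← zpow_natCast, hcast, ← zpow_neg, ← zpow_add]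
      ring_nf
    rw [this, ← zpow_natCast, ← zpow_mul]
    rw [← orderOf_dvd_iff_zpow_eq_one, aux_ord hω hdm]
    have : (d:ℤ) ∣ (k - k % d) := Int.dvd_self_sub_of_emod_eq rfl
    obtain ⟨c, hc⟩ := this
    exact ⟨c, by push_cast; rw [hc]; ring⟩

lemma aux_ind_unique (hω : ∀ x : Fˣ, x ∈ Subgroup.zpowers ω)
    (hdm : d * m = Fintype.card F - 1) {x : Fˣ} {i i' : Fin d}
    (hi : (x * (ω ^ (i : ℕ))⁻¹) ^ m = 1) (hi' : (x * (ω ^ (i' : ℕ))⁻¹) ^ m = 1) :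
    i = i' := by
  have hm : 0 < m := aux_m_pos hdm
  have e1 : (x * (ω ^ (i:ℕ))⁻¹) * ((x * (ω ^ (i':ℕ))⁻¹))⁻¹ = ω ^ (((i':ℕ):ℤ) - ((i:ℕ):ℤ)) := by
    rw [← zpow_natCast ω (i:ℕ), ← zpow_natCast ω (i':ℕ), zpow_sub]
    group
    rw [zpow_neg_one, mul_right_comm, mul_inv_cancel, one_mul]
  have key : ω ^ ((((i':ℕ) : ℤ) - ((i:ℕ):ℤ)) * m) = 1 := by
    rw [zpow_mul, zpow_natCast, ← e1, mul_pow, inv_pow, hi, hi', inv_one, mul_one]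
  rw [← orderOf_dvd_iff_zpow_eq_one, aux_ord hω hdm] at key
  have hdvd : (d : ℤ) ∣ (((i':ℕ) : ℤ) - ((i:ℕ):ℤ)) := by
    have hm' : (m : ℤ) ≠ 0 := by exact_mod_cast hm.ne'
    push_cast at key
    exact (mul_dvd_mul_iff_right hm').mp key
  have h0 : (((i':ℕ) : ℤ) - ((i:ℕ):ℤ)) = 0 := by
    apply Int.eq_zero_of_abs_lt_dvd hdvd
    have h1 : (i:ℕ) < d := i.isLt
    have h2 : (i':ℕ) < d := i'.isLt
    rw [abs_sub_lt_iff]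
    constructor <;> push_cast <;> omega
  exact Fin.ext (by omega)

lemma aux_pow_shift {G : Type*} [CommGroup G] {m : ℕ} {c : G} (ω : G) (i e e' : ℕ)
    (hc : c ^ m = 1) (h : e % m = e' % m) :
    (ω ^ i * c) ^ e = ω ^ (i * e) * (ω ^ (i * e'))⁻¹ * (ω ^ i * c) ^ e' := by
  have hce : c ^ e = c ^ e' := by rw [pow_eq_pow_mod e hc, pow_eq_pow_mod e' hc, h]
  rw [mul_pow, mul_pow, ← pow_mul, ← pow_mul, hce]
  group

end Aux

section Main
variable {F : Type*} [Field F] [Fintype F] {ω : Fˣ} {d m : ℕ}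

lemma comp_gcp (hω : ∀ x : Fˣ, x ∈ Subgroup.zpowers ω) (hd : 0 < d)
    (hdm : d * m = Fintype.card F - 1) {f g : F → F}
    (hf : IsGCP ω d m f) (hg : IsGCP ω d m g) : IsGCP ω d m (g ∘ f) := by
  obtain ⟨a, r, hr, ⟨hf0, hfx⟩, hfb⟩ := hf
  obtain ⟨b, s, hs, ⟨hg0, hgx⟩, hgb⟩ := hg
  have hm : 0 < m := aux_m_pos hdm
  have hmem_self : ∀ i : Fin d, ((ω ^ (i:ℕ)) * (ω ^ (i:ℕ))⁻¹) ^ m = 1 := by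
    intro i; rw [mul_inv_cancel, one_pow]
  have ha : ∀ i : Fin d, a i ≠ 0 := by
    intro i h
    have h1 := hfx (ω ^ (i:ℕ)) i (hmem_self i)
    rw [h, zero_mul] at h1
    have h2 : f ((ω ^ (i:ℕ) : Fˣ) : F) = f 0 := by rw [h1, hf0]
    exact (Units.ne_zero _) (hfb.1 h2)
  set α : Fin d → Fˣ := fun i => Units.mk0 (a i) (ha i) with hα
  choose ind hind using aux_exists_ind hω hd hdm (ω := ω)
  set j : Fin d → Fin d := fun i => ind (α i * ω ^ ((i:ℕ) * r i)) with hjdef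
  have hdecomp : ∀ (x : Fˣ) (i : Fin d), x = ω ^ (i:ℕ) * (x * (ω ^ (i:ℕ))⁻¹) := by
    intro x i
    rw [mul_comm x ((ω ^ (i:ℕ))⁻¹), ← mul_assoc, mul_inv_cancel, one_mul]
  have hmemf : ∀ (x : Fˣ) (i : Fin d), (x * (ω ^ (i:ℕ))⁻¹) ^ m = 1 →
      ((α i * x ^ r i) * (ω ^ ((j i : ℕ)))⁻¹) ^ m = 1 := by
    intro x i hx
    have hji := hind (α i * ω ^ ((i:ℕ) * r i))
    have key : (α i * x ^ r i) * (ω ^ ((j i : ℕ)))⁻¹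
        = ((α i * ω ^ ((i:ℕ) * r i)) * (ω ^ ((j i : ℕ)))⁻¹) * (x * (ω ^ (i:ℕ))⁻¹) ^ (r i) := by
      conv_lhs => rw [hdecomp x i]
      rw [mul_pow, ← pow_mul]
      simp [mul_comm, mul_left_comm, mul_assoc]
    rw [key, mul_pow, hji, one_mul, ← pow_mul, mul_comm (r i) m, pow_mul, hx, one_pow]
  set e : Fin d → ℕ := fun i => r i * s (j i) with hedef
  set r' : Fin d → ℕ := fun i => (e i - 1) % m + 1 with hr'def
  set a' : Fin d → F := fun i =>
    b (j i) * a i ^ s (j i) * ((ω ^ ((i:ℕ) * e i) * (ω ^ ((i:ℕ) * r' i))⁻¹ : Fˣ) : F) with ha'def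
  refine ⟨a', r', ?_, ⟨?_, ?_⟩, hgb.comp hfb⟩
  · intro i
    have := Nat.mod_lt (e i - 1) hm
    constructor <;> simp [hr'def] <;> omega
  · simp [Function.comp_apply, hf0, hg0]
  · intro x i hx
    have h1 : f x = a i * (x:F) ^ (r i) := hfx x i hx
    have h2 : f x = ((α i * x ^ r i : Fˣ) : F) := by
      rw [h1]; push_cast [hα]; rfl
    have h3 := hgx (α i * x ^ r i) (j i) (hmemf x i hx)
    have h4 : 1 ≤ e i := Nat.one_le_iff_ne_zero.mpr
      (Nat.mul_ne_zero (by have := (hr i).1; omega) (by have := (hs (j i)).1; omega))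
    have hmod : (e i) % m = (r' i) % m := by
      have hre : r' i = (e i - 1) % m + 1 := rfl
      rw [hre, Nat.mod_add_mod, Nat.sub_add_cancel h4]
    have h5 := aux_pow_shift (c := x * (ω ^ (i:ℕ))⁻¹) ω (i:ℕ) (e i) (r' i) hx hmod
    rw [← hdecomp x i] at h5
    have h5' : (x:F) ^ (e i)
        = ((ω ^ ((i:ℕ) * e i) * (ω ^ ((i:ℕ) * r' i))⁻¹ : Fˣ) : F) * (x:F) ^ (r' i) := by
      exact_mod_cast congrArg Units.val h5
    show g (f (x:F)) = a' i * (x:F) ^ (r' i)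
    rw [h2, h3]
    have h6 : ((α i * x ^ r i : Fˣ) : F) = a i * (x:F) ^ (r i) := by push_cast [hα]; rfl
    rw [h6, mul_pow, ← pow_mul, show r i * s (j i) = e i from rfl, h5', ha'def]
    ring
end Main

section Inv
variable {F : Type*} [Field F] [Fintype F] {ω : Fˣ} {d m : ℕ}

lemma aux_id1 (a w z y : Fˣ) :
    a * (w * ((a * w * z⁻¹)⁻¹ * (y * z⁻¹))) = y := by
  apply Units.ext; push_cast; field_simp

lemma aux_id2 (v a w z y : Fˣ) (t : ℕ) :
    v * (((a * w * z⁻¹)⁻¹ * (y * z⁻¹)) ^ t) = v * (a ^ t * w ^ t)⁻¹ * y ^ t := by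
  apply Units.ext; push_cast; field_simp
  calc _ = (y:F) ^ t * ((a:F) * (a:F)⁻¹) ^ t * ((w:F) * (w:F)⁻¹) ^ t := by ring
    _ = _ := by rw [mul_inv_cancel₀ a.ne_zero, mul_inv_cancel₀ w.ne_zero]; simp

lemma inv_gcp (hω : ∀ x : Fˣ, x ∈ Subgroup.zpowers ω) (hd : 0 < d)
    (hdm : d * m = Fintype.card F - 1) {f : F → F}
    (hf : IsGCP ω d m f) : IsGCP ω d m (Function.invFun f) := by
  obtain ⟨a, r, hr, ⟨hf0, hfx⟩, hfb⟩ := hf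
  have hm : 0 < m := aux_m_pos hdm
  have hmem_self : ∀ i : Fin d, ((ω ^ (i:ℕ)) * (ω ^ (i:ℕ))⁻¹) ^ m = 1 := by
    intro i; rw [mul_inv_cancel, one_pow]
  have ha : ∀ i : Fin d, a i ≠ 0 := by
    intro i h
    have h1 := hfx (ω ^ (i:ℕ)) i (hmem_self i)
    rw [h, zero_mul] at h1
    have h2 : f ((ω ^ (i:ℕ) : Fˣ) : F) = f 0 := by rw [h1, hf0]
    exact (Units.ne_zero _) (hfb.1 h2)
  set α : Fin d → Fˣ := fun i => Units.mk0 (a i) (ha i) with hα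
  choose ind hind using aux_exists_ind hω hd hdm (ω := ω)
  set j : Fin d → Fin d := fun i => ind (α i * ω ^ ((i:ℕ) * r i)) with hjdef
  have hdecomp : ∀ (x : Fˣ) (i : Fin d), x = ω ^ (i:ℕ) * (x * (ω ^ (i:ℕ))⁻¹) := by
    intro x i
    rw [mul_comm x ((ω ^ (i:ℕ))⁻¹), ← mul_assoc, mul_inv_cancel, one_mul]
  have hmemf : ∀ (x : Fˣ) (i : Fin d), (x * (ω ^ (i:ℕ))⁻¹) ^ m = 1 →
      ((α i * x ^ r i) * (ω ^ ((j i : ℕ)))⁻¹) ^ m = 1 := by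
    intro x i hx
    have hji := hind (α i * ω ^ ((i:ℕ) * r i))
    have key : (α i * x ^ r i) * (ω ^ ((j i : ℕ)))⁻¹
        = ((α i * ω ^ ((i:ℕ) * r i)) * (ω ^ ((j i : ℕ)))⁻¹) * (x * (ω ^ (i:ℕ))⁻¹) ^ (r i) := by
      conv_lhs => rw [hdecomp x i]
      rw [mul_pow, ← pow_mul]
      simp [mul_comm, mul_left_comm, mul_assoc]
    rw [key, mul_pow, hji, one_mul, ← pow_mul, mul_comm (r i) m, pow_mul, hx, one_pow]
  -- exponents r i are coprime to m
  have hcop : ∀ i : Fin d, Nat.Coprime (r i) m := by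
    intro i
    by_contra hco
    have hg0 : 0 < Nat.gcd (r i) m := Nat.gcd_pos_of_pos_right _ hm
    have hg1 : 1 < Nat.gcd (r i) m := by
      rcases Nat.lt_or_ge 1 (Nat.gcd (r i) m) with h1 | h1
      · exact h1
      · exact absurd (by omega : Nat.gcd (r i) m = 1) hco
    set p := (Nat.gcd (r i) m).minFac with hp
    have hpp : p.Prime := Nat.minFac_prime (by omega)
    have hpr : p ∣ r i := (Nat.minFac_dvd _).trans (Nat.gcd_dvd_left _ _)
    have hpm : p ∣ m := (Nat.minFac_dvd _).trans (Nat.gcd_dvd_right _ _)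
    set c : Fˣ := ω ^ (d * (m / p)) with hc
    have hcm : c ^ m = 1 := by
      rw [hc, ← pow_mul, ← orderOf_dvd_iff_pow_eq_one, aux_ord hω hdm]
      exact ⟨m / p, by ring⟩
    have hcr : c ^ (r i) = 1 := by
      rw [hc, ← pow_mul, ← orderOf_dvd_iff_pow_eq_one, aux_ord hω hdm]
      refine ⟨r i / p, ?_⟩
      calc d * (m / p) * r i = d * (m / p) * (p * (r i / p)) := by
            rw [Nat.mul_div_cancel' hpr]
        _ = d * ((m / p) * p) * (r i / p) := by ring
        _ = d * m * (r i / p) := by rw [Nat.div_mul_cancel hpm]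
    have hcne : c ≠ 1 := by
      rw [hc, ne_eq, ← orderOf_dvd_iff_pow_eq_one, aux_ord hω hdm]
      intro hdvd
      have h2 : p ≤ m := Nat.le_of_dvd hm hpm
      have h3 : 0 < m / p := Nat.div_pos h2 hpp.pos
      have h4 : m / p < m := Nat.div_lt_self hm hpp.one_lt
      have h5 : 0 < d * (m / p) := Nat.mul_pos hd h3
      have h6 : d * (m / p) < d * m := (Nat.mul_lt_mul_left hd).mpr h4
      have := Nat.le_of_dvd h5 hdvd
      omega
    have hx2 : ((ω ^ (i:ℕ) * c) * (ω ^ (i:ℕ))⁻¹) ^ m = 1 := by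
      rw [mul_comm (ω ^ (i:ℕ)) c, mul_assoc, mul_inv_cancel, mul_one, hcm]
    have e1 := hfx (ω ^ (i:ℕ)) i (hmem_self i)
    have e2 := hfx (ω ^ (i:ℕ) * c) i hx2
    have hval : f ((ω ^ (i:ℕ) * c : Fˣ) : F) = f ((ω ^ (i:ℕ) : Fˣ) : F) := by
      rw [e1, e2]
      have hcrF : ((c : F)) ^ (r i) = 1 := by
        have := congrArg Units.val hcr; push_cast at this; exact this
      push_cast
      rw [mul_pow, hcrF, mul_one]
    have hu : (ω ^ (i:ℕ) * c : Fˣ) = ω ^ (i:ℕ) := Units.ext (hfb.1 hval)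
    exact hcne (mul_left_cancel (a := ω ^ (i:ℕ))
      (show ω ^ (i:ℕ) * c = ω ^ (i:ℕ) * 1 by rw [mul_one, hu]))
  -- inverse exponents
  have ht : ∀ i : Fin d, ∃ t : ℕ, (1 ≤ t ∧ t ≤ m) ∧ (r i * t) % m = 1 % m := by
    intro i
    have h1 : r i ^ (Nat.totient m) ≡ 1 [MOD m] := Nat.ModEq.pow_totient (hcop i)
    have hφ : 1 ≤ Nat.totient m := Nat.totient_pos.mpr hm
    set t₀ := r i ^ (Nat.totient m - 1) with ht₀
    have h2 : r i * t₀ = r i ^ (Nat.totient m) := by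
      rw [ht₀, ← pow_succ']
      congr 1
      omega
    refine ⟨(t₀ + (m - 1)) % m + 1, ⟨by omega, ?_⟩, ?_⟩
    · have := Nat.mod_lt (t₀ + (m - 1)) hm
      omega
    · have h3 : ((t₀ + (m - 1)) % m + 1) % m = t₀ % m := by
        rw [Nat.mod_add_mod, show t₀ + (m - 1) + 1 = t₀ + m by omega, Nat.add_mod_right]
      have h4 : ((t₀ + (m - 1)) % m + 1) ≡ t₀ [MOD m] := h3
      calc (r i * ((t₀ + (m - 1)) % m + 1)) % m
          = (r i * t₀) % m := Nat.ModEq.mul_left (r i) h4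
        _ = 1 % m := by rw [h2]; exact h1
  choose t htb htmod using ht
  -- j is surjective
  have hjsurj : Function.Surjective j := by
    intro k
    obtain ⟨x, hxk⟩ := hfb.2 ((ω ^ (k:ℕ) : Fˣ) : F)
    have hx0 : x ≠ 0 := by
      rintro rfl; rw [hf0] at hxk; exact (Units.ne_zero _) hxk.symm
    set xu : Fˣ := Units.mk0 x hx0 with hxu
    have hfx' : f x = ((α (ind xu) * xu ^ r (ind xu) : Fˣ) : F) := by
      have := hfx xu (ind xu) (hind xu)
      rw [show ((xu : Fˣ) : F) = x from rfl] at this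
      rw [this]; push_cast [hα]; rfl
    have heq : (α (ind xu) * xu ^ r (ind xu) : Fˣ) = ω ^ (k:ℕ) :=
      Units.ext (by rw [← hfx', hxk])
    refine ⟨ind xu, aux_ind_unique hω hdm ?_ (hmem_self k)⟩
    rw [← heq]
    exact hmemf xu (ind xu) (hind xu)
  choose σ hσ using hjsurj
  -- the data for the inverse map
  set t' : Fin d → ℕ := fun k => t (σ k) with ht'
  set A : Fin d → F := fun k =>
    ((ω ^ ((σ k : ℕ)) * ((α (σ k)) ^ (t' k) * (ω ^ ((σ k : ℕ) * r (σ k))) ^ (t' k))⁻¹ : Fˣ) : F)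
    with hA
  have hleft : ∀ z : F, Function.invFun f (f z) = z := fun z =>
    Function.leftInverse_invFun hfb.1 z
  refine ⟨A, t', fun k => htb (σ k), ⟨?_, ?_⟩, ?_⟩
  · have := hleft 0
    rw [hf0] at this
    exact this
  · intro y k hy
    set i := σ k with hi
    have hji : j i = k := hσ k
    have hw : ((α i * ω ^ ((i:ℕ) * r i)) * (ω ^ (k:ℕ))⁻¹) ^ m = 1 := by
      have h0 := hind (α i * ω ^ ((i:ℕ) * r i))
      rw [show ind (α i * ω ^ ((i:ℕ) * r i)) = k from hji] at h0
      exact h0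
    set w : Fˣ := α i * ω ^ ((i:ℕ) * r i) * (ω ^ (k:ℕ))⁻¹ with hwdef
    set u : Fˣ := y * (ω ^ (k:ℕ))⁻¹ with hudef
    have hum : u ^ m = 1 := hy
    have hwu : (w⁻¹ * u) ^ m = 1 := by
      rw [mul_pow, inv_pow, hw, hum, inv_one, one_mul]
    set cc : Fˣ := (w⁻¹ * u) ^ (t i) with hccdef
    have hccm : cc ^ m = 1 := by
      rw [hccdef, ← pow_mul, mul_comm (t i) m, pow_mul, hwu, one_pow]
    have hccr : cc ^ (r i) = w⁻¹ * u := by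
      rw [hccdef, ← pow_mul, pow_eq_pow_mod (t i * r i) hwu,
        mul_comm (t i) (r i), htmod i, ← pow_eq_pow_mod 1 hwu, pow_one]
    set x : Fˣ := ω ^ (i:ℕ) * cc with hxdef
    have hxmem : (x * (ω ^ (i:ℕ))⁻¹) ^ m = 1 := by
      rw [hxdef, mul_comm (ω ^ (i:ℕ)) cc, mul_assoc, mul_inv_cancel, mul_one, hccm]
    have hunit : α i * x ^ r i = y := by
      rw [hxdef, mul_pow, ← pow_mul, hccr, hwdef, hudef]
      exact aux_id1 (α i) (ω ^ ((i:ℕ) * r i)) (ω ^ (k:ℕ)) y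
    have hfxy : f (x : F) = (y : F) := by
      rw [hfx x i hxmem]
      have : ((α i * x ^ r i : Fˣ) : F) = a i * (x:F) ^ (r i) := by push_cast [hα]; rfl
      rw [← this, hunit]
    have hinv : Function.invFun f (y : F) = (x : F) := by
      rw [← hfxy]; exact hleft _
    have hxval : x = (ω ^ (i:ℕ) *
        ((α i) ^ (t' k) * (ω ^ ((i:ℕ) * r i)) ^ (t' k))⁻¹ : Fˣ) * y ^ (t' k) := by
      rw [hxdef, hccdef, hwdef, hudef]
      exact aux_id2 (ω ^ (i:ℕ)) (α i) (ω ^ ((i:ℕ) * r i)) (ω ^ (k:ℕ)) y (t i)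
    rw [hinv, hxval, hA]
    push_cast
    ring
  · have hright : ∀ z : F, f (Function.invFun f z) = z := fun z =>
      Function.rightInverse_invFun hfb.2 z
    exact Function.bijective_iff_has_inverse.mpr ⟨f, hright, hleft⟩
end Inv

/-- The index `d` generalized cyclotomic permutations of `F` are closed under composition
and under taking the inverse function; i.e. they form a group under composition. -/
theorem stmt1 {F : Type*} [Field F] [Fintype F] (ω : Fˣ)
    (hω : ∀ x : Fˣ, x ∈ Subgroup.zpowers ω)
    (d m : ℕ) (hd : 0 < d) (hdm : d * m = Fintype.card F - 1)
    (f g : F → F) (hf : IsGCP ω d m f) (hg : IsGCP ω d m g) :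
    IsGCP ω d m (g ∘ f) ∧ IsGCP ω d m (Function.invFun f) :=
  ⟨comp_gcp hω hd hdm hf hg, inv_gcp hω hd hdm hf⟩
end

section
/- Let q be a prime power, d a positive divisor of q−1, ω a primitive root of F_q, and m := (q−1)/d. Let s be an integer with 1 ≤ s ≤ m and gcd(s, m) = 1. Then the number of tuples a = (a_0,…,a_{d−1}) ∈ F_q^d for which the index d generalized cyclotomic mapping f_ω(a,(s,s,…,s)) is a permutation of F_q (i.e., the number of s-th order cyclotomic permutations of F_q of index d) equals d!·m^d. -/
namespace GCMaux
set_option linter.unusedSectionVars false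

lemma fin_eq_of_dvd {d : ℕ} (i j : Fin d) (h : (d : ℤ) ∣ (i : ℤ) - (j : ℤ)) : i = j := by
  have h1 : ((i : ℤ) - (j : ℤ)) = 0 := by
    refine Int.eq_zero_of_abs_lt_dvd h ?_
    have hi := i.isLt
    have hj := j.isLt
    rw [abs_lt]
    omega
  have : (i : ℤ) = (j : ℤ) := by omega
  exact Fin.ext (by exact_mod_cast this)

noncomputable def dlog {F : Type*} [Field F] (ω : Fˣ)
    (hω : ∀ x : Fˣ, x ∈ Subgroup.zpowers ω) (x : Fˣ) : ℤ :=
  (Subgroup.mem_zpowers_iff.mp (hω x)).choose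

lemma dlog_spec {F : Type*} [Field F] (ω : Fˣ)
    (hω : ∀ x : Fˣ, x ∈ Subgroup.zpowers ω) (x : Fˣ) : ω ^ dlog ω hω x = x :=
  (Subgroup.mem_zpowers_iff.mp (hω x)).choose_spec

def ifin (d : ℕ) (hd : 0 < d) (k : ℤ) : Fin d :=
  ⟨(k % (d : ℤ)).toNat, by
    have h0 : (0 : ℤ) < (d : ℤ) := by exact_mod_cast hd
    have h1 := Int.emod_lt_of_pos k h0
    have h2 := Int.emod_nonneg k h0.ne'
    omega⟩

lemma ifin_dvd (d : ℕ) (hd : 0 < d) (k : ℤ) : (d : ℤ) ∣ k - (ifin d hd k : ℤ) := by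
  have h0 : (0 : ℤ) < (d : ℤ) := by exact_mod_cast hd
  have h2 := Int.emod_nonneg k h0.ne'
  have hco : ((ifin d hd k : ℕ) : ℤ) = k % (d : ℤ) := Int.toNat_of_nonneg h2
  refine ⟨k / (d : ℤ), ?_⟩
  rw [hco, Int.emod_def]
  ring

section Ctx

variable {F : Type*} [Field F] [Fintype F] (ω : Fˣ)
  (hω : ∀ x : Fˣ, x ∈ Subgroup.zpowers ω) {d m : ℕ} (hd : 0 < d) (hm : 0 < m)
  (hord : orderOf ω = d * m)

include hord in
lemma zkey (A B : ℤ) : ω ^ A = ω ^ B ↔ ((d : ℤ) * m) ∣ A - B := by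
  rw [zpow_eq_zpow_iff_modEq, hord, Int.modEq_iff_dvd]
  push_cast
  exact dvd_sub_comm

include hm hord in
lemma coset_iff (x : Fˣ) (i : Fin d) :
    (x * (ω ^ (i : ℕ))⁻¹) ^ m = 1 ↔ (d : ℤ) ∣ dlog ω hω x - (i : ℤ) := by
  have hx : ω ^ dlog ω hω x = x := dlog_spec ω hω x
  have key : (x * (ω ^ (i : ℕ))⁻¹) ^ m = ω ^ ((dlog ω hω x - (i : ℤ)) * m) := by
    conv_lhs => rw [← hx]
    rw [← zpow_natCast ω (i : ℕ), ← zpow_sub, ← zpow_natCast _ m, ← zpow_mul]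
  rw [key, show (1 : Fˣ) = ω ^ (0 : ℤ) by simp, zkey ω hord]
  rw [sub_zero]
  have hm' : (m : ℤ) ≠ 0 := by exact_mod_cast hm.ne'
  exact mul_dvd_mul_iff_right hm'

include hω hm hord in
lemma idx_unique (x : Fˣ) (i i' : Fin d)
    (h : (x * (ω ^ (i : ℕ))⁻¹) ^ m = 1) (h' : (x * (ω ^ (i' : ℕ))⁻¹) ^ m = 1) : i = i' := by
  rw [coset_iff ω hω hm hord] at h h'
  refine (fin_eq_of_dvd i' i ?_).symm
  have := dvd_sub h h'
  simpa using this

include hω hm hord in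
lemma mem_ifin (x : Fˣ) :
    (x * (ω ^ ((ifin d hd (dlog ω hω x)) : ℕ))⁻¹) ^ m = 1 := by
  rw [coset_iff ω hω hm hord]
  exact ifin_dvd d hd _

/-- The canonical `s`-th order cyclotomic map attached to `a`. -/
noncomputable def cmap (a : Fin d → F) (s : ℕ) : F → F := fun x =>
  letI := Classical.decEq F
  if h : x = 0 then 0 else
    a (ifin d hd (dlog ω hω (Units.mk0 x h))) * x ^ s

lemma cmap_zero (a : Fin d → F) (s : ℕ) : cmap ω hω hd a s 0 = 0 := by
  rw [cmap]
  exact dif_pos rfl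

lemma cmap_unit (a : Fin d → F) (s : ℕ) (u : Fˣ) :
    cmap ω hω hd a s (u : F) = a (ifin d hd (dlog ω hω u)) * (u : F) ^ s := by
  rw [cmap, dif_neg u.ne_zero, Units.mk0_val]

include hm hord in
lemma cmap_isGCM (a : Fin d → F) (s : ℕ) :
    IsGCM ω d m a (fun _ => s) (cmap ω hω hd a s) := by
  refine ⟨cmap_zero ω hω hd a s, fun x i hxi => ?_⟩
  rw [cmap_unit ω hω hd a s x,
    idx_unique ω hω hm hord x _ i (mem_ifin ω hω hd hm hord x) hxi]

include hm hord in
lemma isGCM_eq_cmap (a : Fin d → F) (s : ℕ) (f : F → F)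
    (hf : IsGCM ω d m a (fun _ => s) f) : f = cmap ω hω hd a s := by
  funext x
  by_cases h : x = 0
  · rw [h, hf.1, cmap_zero]
  · have hx : x = ((Units.mk0 x h : Fˣ) : F) := rfl
    rw [hx, cmap_unit ω hω hd a s, hf.2 (Units.mk0 x h) _ (mem_ifin ω hω hd hm hord _)]


variable (s : ℕ)

/-- The tuple of coefficients attached to a permutation `σ` and `t : Fin d → Fin m`. -/
noncomputable def Avec (σ : Equiv.Perm (Fin d)) (t : Fin d → Fin m) : Fin d → F :=
  fun i => ((ω ^ ((σ i : ℤ) - (i : ℤ) * s + (d : ℤ) * (t i : ℤ)) : Fˣ) : F)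

lemma keyF (e p : ℤ) (q : ℕ) :
    ((ω ^ e : Fˣ) : F) * (((ω ^ p : Fˣ) : F)) ^ q = ((ω ^ (e + p * q) : Fˣ) : F) := by
  rw [zpow_add, zpow_mul, zpow_natCast]
  push_cast
  ring

include hω hm hord in
lemma cmap_Avec_bij (hcop : Nat.Coprime s m) (σ : Equiv.Perm (Fin d)) (t : Fin d → Fin m) :
    Function.Bijective (cmap ω hω hd (Avec ω s σ t) s) := by
  set a := Avec ω s σ t with ha
  rw [← Finite.injective_iff_bijective]
  have hunit : ∀ u : Fˣ,
      cmap ω hω hd a s (u : F) =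
        ((ω ^ (((σ (ifin d hd (dlog ω hω u)) : ℤ) - ((ifin d hd (dlog ω hω u)) : ℤ) * s
          + (d : ℤ) * ((t (ifin d hd (dlog ω hω u))) : ℤ)) + dlog ω hω u * s) : Fˣ) : F) := by
    intro u
    rw [cmap_unit, ha, Avec]
    conv_lhs => rw [show (u : F) = ((ω ^ dlog ω hω u : Fˣ) : F) by rw [dlog_spec]]
    rw [keyF]
  have hnz : ∀ u : Fˣ, cmap ω hω hd a s (u : F) ≠ 0 := by
    intro u
    rw [hunit u]
    exact Units.ne_zero _
  intro x y hxy
  by_cases hx : x = 0 <;> by_cases hy : y = 0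
  · rw [hx, hy]
  · exact absurd hxy.symm (by rw [hx, cmap_zero]; exact fun h => hnz (Units.mk0 y hy) h)
  · exact absurd hxy (by rw [hy, cmap_zero]; exact fun h => hnz (Units.mk0 x hx) h)
  · set u := Units.mk0 x hx with hu
    set v := Units.mk0 y hy with hv
    have hxu : x = (u : F) := rfl
    have hyv : y = (v : F) := rfl
    rw [hxu, hyv, hunit u, hunit v] at hxy
    set i := ifin d hd (dlog ω hω u) with hi
    set j := ifin d hd (dlog ω hω v) with hj
    set P := dlog ω hω u with hP
    set R := dlog ω hω v with hR
    have hxy2 : ((d : ℤ) * m) ∣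
        (((σ i : ℤ) - (i : ℤ) * s + (d : ℤ) * (t i : ℤ)) + P * s)
        - (((σ j : ℤ) - (j : ℤ) * s + (d : ℤ) * (t j : ℤ)) + R * s) := by
      rw [← zkey ω hord]
      exact Units.ext hxy
    have hPi : (d : ℤ) ∣ P - (i : ℤ) := ifin_dvd d hd P
    have hRj : (d : ℤ) ∣ R - (j : ℤ) := ifin_dvd d hd R
    have hdd : (d : ℤ) ∣ (d : ℤ) * m := dvd_mul_right _ _
    have hσ : σ i = σ j := by
      apply fin_eq_of_dvd
      have heq : ((σ i : ℤ) - (σ j : ℤ)) =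
          ((((σ i : ℤ) - (i : ℤ) * s + (d : ℤ) * (t i : ℤ)) + P * s)
          - (((σ j : ℤ) - (j : ℤ) * s + (d : ℤ) * (t j : ℤ)) + R * s))
          - (s : ℤ) * (P - (i : ℤ)) + (s : ℤ) * (R - (j : ℤ))
          - (d : ℤ) * ((t i : ℤ) - (t j : ℤ)) := by ring
      rw [heq]
      exact dvd_sub (dvd_add (dvd_sub (hdd.trans hxy2) (hPi.mul_left _)) (hRj.mul_left _))
        (dvd_mul_right _ _)
    have hij : i = j := σ.injective hσ
    have hPR : (d : ℤ) ∣ P - R := by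
      obtain ⟨c1, hc1⟩ := hPi
      obtain ⟨c2, hc2⟩ := hRj
      have hijz : ((i : ℕ) : ℤ) = ((j : ℕ) : ℤ) := by rw [hij]
      exact ⟨c1 - c2, by rw [mul_sub, ← hc1, ← hc2, hijz]; ring⟩
    obtain ⟨w, hw⟩ := hPR
    have hbig := hxy2
    rw [hij] at hbig
    obtain ⟨c, hc⟩ := hbig
    have hws : ((d : ℤ) * m) ∣ (d : ℤ) * (w * s) := by
      refine ⟨c, ?_⟩
      have hws0 : (P - R) * (s : ℤ) = (d : ℤ) * m * c := by linear_combination hc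
      rw [← mul_assoc, ← hw]
      linear_combination hws0
    have hmws : (m : ℤ) ∣ w * s := by
      have hd0 : (d : ℤ) ≠ 0 := by exact_mod_cast hd.ne'
      exact (mul_dvd_mul_iff_left hd0).mp hws
    have hco : IsCoprime (m : ℤ) (s : ℤ) := (Nat.isCoprime_iff_coprime.mpr hcop.symm)
    have hmw : (m : ℤ) ∣ w := hco.dvd_of_dvd_mul_right hmws
    obtain ⟨c2, hc2⟩ := hmw
    have huv : u = v := by
      rw [← dlog_spec ω hω u, ← dlog_spec ω hω v, ← hP, ← hR, zkey ω hord]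
      exact ⟨c2, by rw [hw, hc2]; ring⟩
    rw [hxu, hyv, huv]

lemma ifin_eq {e : ℤ} {j : Fin d} (h : (d : ℤ) ∣ e - (j : ℤ)) : ifin d hd e = j := by
  apply fin_eq_of_dvd
  have h2 := ifin_dvd d hd e
  have : ((ifin d hd e : ℕ) : ℤ) - (j : ℤ) = (e - (j : ℤ)) - (e - (ifin d hd e : ℤ)) := by ring
  rw [this]
  exact dvd_sub h h2

include hω hm hord in
lemma hidx_zpow (e : ℤ) : ifin d hd (dlog ω hω (ω ^ e)) = ifin d hd e := by
  have h1 : ((d : ℤ) * m) ∣ dlog ω hω (ω ^ e) - e := (zkey ω hord _ _).mp (dlog_spec ω hω _)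
  have h2 := ifin_dvd d hd e
  apply ifin_eq hd
  have : dlog ω hω (ω ^ e) - ((ifin d hd e : ℕ) : ℤ) =
      (dlog ω hω (ω ^ e) - e) + (e - ((ifin d hd e : ℕ) : ℤ)) := by ring
  rw [this]
  exact dvd_add ((dvd_mul_right (d : ℤ) (m : ℤ)).trans h1) h2

include hω hm hord in
lemma a_ne_zero (a : Fin d → F) (hbij : Function.Bijective (cmap ω hω hd a s)) (i : Fin d) :
    a i ≠ 0 := by
  intro h0
  have hxne : ((ω ^ (i : ℕ) : Fˣ) : F) ≠ 0 := Units.ne_zero _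
  have hidx : ifin d hd (dlog ω hω (ω ^ (i : ℕ))) = i := by
    apply idx_unique ω hω hm hord (ω ^ (i : ℕ)) _ i (mem_ifin ω hω hd hm hord _)
    simp
  have hz : cmap ω hω hd a s ((ω ^ (i : ℕ) : Fˣ) : F) = cmap ω hω hd a s 0 := by
    rw [cmap_unit, hidx, h0, zero_mul, cmap_zero]
  exact hxne (hbij.injective hz)

include hω hm hord in
lemma exists_Avec (hcop : Nat.Coprime s m) (a : Fin d → F)
    (hbij : Function.Bijective (cmap ω hω hd a s)) :
    ∃ (σ : Equiv.Perm (Fin d)) (t : Fin d → Fin m), Avec ω s σ t = a := by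
  have hne : ∀ i, a i ≠ 0 := a_ne_zero ω hω hd hm hord s a hbij
  set k : Fin d → ℤ := fun i => dlog ω hω (Units.mk0 (a i) (hne i)) with hk
  have hak : ∀ i, a i = ((ω ^ k i : Fˣ) : F) := fun i => by
    rw [hk, dlog_spec]
    rfl
  set σ0 : Fin d → Fin d := fun i => ifin d hd (k i + (i : ℤ) * s) with hσ0
  have hcm : ∀ e : ℤ, cmap ω hω hd a s ((ω ^ e : Fˣ) : F)
      = ((ω ^ (k (ifin d hd e) + e * s) : Fˣ) : F) := by
    intro e
    rw [cmap_unit, hidx_zpow ω hω hd hm hord e, hak]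
    exact keyF ω _ _ _
  have hinj : Function.Injective σ0 := by
    intro i j hij0
    obtain ⟨c1, hc1⟩ := ifin_dvd d hd (k i + (i : ℤ) * s)
    obtain ⟨c2, hc2⟩ := ifin_dvd d hd (k j + (j : ℤ) * s)
    have hc1' : k i + (i : ℤ) * s - ((σ0 i : ℕ) : ℤ) = (d : ℤ) * c1 := hc1
    have hc2' : k j + (j : ℤ) * s - ((σ0 j : ℕ) : ℤ) = (d : ℤ) * c2 := hc2
    have hσz : ((σ0 i : ℕ) : ℤ) = ((σ0 j : ℕ) : ℤ) := by rw [hij0]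
    have hdvd : (d : ℤ) ∣ (k i + (i : ℤ) * s) - (k j + (j : ℤ) * s) :=
      ⟨c1 - c2, by linear_combination hc1' - hc2' + hσz⟩
    obtain ⟨g, hg⟩ := hdvd
    obtain ⟨uu, vv, huv⟩ := (Nat.isCoprime_iff_coprime.mpr hcop : IsCoprime (s : ℤ) (m : ℤ))
    have hidx1 : ifin d hd ((j : ℤ) + (d : ℤ) * g * uu) = j :=
      ifin_eq hd ⟨g * uu, by ring⟩
    have hidx2 : ifin d hd ((i : ℤ) : ℤ) = i := ifin_eq hd (by simp)
    have e1 : cmap ω hω hd a s ((ω ^ ((j : ℤ) + (d : ℤ) * g * uu) : Fˣ) : F)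
        = cmap ω hω hd a s ((ω ^ ((i : ℤ)) : Fˣ) : F) := by
      rw [hcm, hcm, hidx1, hidx2]
      congr 1
      rw [zkey ω hord]
      exact ⟨-(g * vv), by linear_combination ((d : ℤ) * g) * huv - hg⟩
    have e2 : (ω ^ ((j : ℤ) + (d : ℤ) * g * uu) : Fˣ) = ω ^ ((i : ℤ)) :=
      Units.ext (hbij.injective e1)
    rw [zkey ω hord] at e2
    obtain ⟨c, hc⟩ := e2
    refine (fin_eq_of_dvd j i ⟨m * c - g * uu, ?_⟩).symm
    linear_combination hc
  have hdvd2 : ∀ i, (d : ℤ) ∣ (k i + (i : ℤ) * s) - ((σ0 i : ℕ) : ℤ) :=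
    fun i => ifin_dvd d hd _
  choose q hq using hdvd2
  refine ⟨Equiv.ofBijective σ0 ((Finite.injective_iff_bijective).mp hinj),
    fun i => ifin m hm (q i), ?_⟩
  funext i
  rw [Avec, hak i]
  congr 1
  rw [Equiv.ofBijective_apply, zkey ω hord]
  obtain ⟨c, hc⟩ := ifin_dvd m hm (q i)
  exact ⟨-c, by linear_combination (-(d : ℤ)) * hc - hq i⟩

include hd hord in
lemma Avec_inj (σ σ' : Equiv.Perm (Fin d)) (t t' : Fin d → Fin m)
    (h : Avec ω s σ t = Avec ω s σ' t') : σ = σ' ∧ t = t' := by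
  have key : ∀ i, σ i = σ' i ∧ t i = t' i := by
    intro i
    have h1 : (ω ^ ((σ i : ℤ) - (i : ℤ) * s + (d : ℤ) * (t i : ℤ)) : Fˣ)
        = ω ^ ((σ' i : ℤ) - (i : ℤ) * s + (d : ℤ) * (t' i : ℤ)) :=
      Units.ext (congrFun h i)
    rw [zkey ω hord] at h1
    obtain ⟨c, hc⟩ := h1
    have hσ : σ i = σ' i := by
      refine fin_eq_of_dvd _ _ ⟨m * c - ((t i : ℤ) - (t' i : ℤ)), ?_⟩
      linear_combination hc
    have hσz : ((σ i : ℕ) : ℤ) = ((σ' i : ℕ) : ℤ) := by rw [hσ]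
    refine ⟨hσ, fin_eq_of_dvd _ _ ⟨c, ?_⟩⟩
    have hd0 : (d : ℤ) ≠ 0 := by exact_mod_cast hd.ne'
    apply mul_left_cancel₀ hd0
    linear_combination hc - hσz
  exact ⟨Equiv.ext fun i => (key i).1, funext fun i => (key i).2⟩

end Ctx

end GCMaux

/-- The number of tuples `a ∈ F^d` for which the `s`-th order cyclotomic mapping
`f_ω(a,(s,…,s))` of index `d` is a permutation of `F` equals `d! · m^d`. -/
theorem stmt2 {F : Type*} [Field F] [Fintype F] (ω : Fˣ)
    (hω : ∀ x : Fˣ, x ∈ Subgroup.zpowers ω)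
    (d m : ℕ) (hd : 0 < d) (hdm : d * m = Fintype.card F - 1)
    (s : ℕ) (hs1 : 1 ≤ s) (hs2 : s ≤ m) (hcop : Nat.Coprime s m) :
    Nat.card {a : Fin d → F // ∃ f : F → F,
        IsGCM ω d m a (fun _ => s) f ∧ Function.Bijective f}
      = Nat.factorial d * m ^ d := by
  classical
  have hm : 0 < m := by
    rcases Nat.eq_zero_or_pos m with h | h
    · have h2 : 1 < Fintype.card F := Fintype.one_lt_card
      rw [h, Nat.mul_zero] at hdm
      omega
    · exact h
  have hord : orderOf ω = d * m := by
    rw [orderOf_eq_card_of_forall_mem_zpowers hω, Nat.card_eq_fintype_card, Fintype.card_units, ← hdm]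
  set S := {a : Fin d → F // ∃ f : F → F,
      IsGCM ω d m a (fun _ => s) f ∧ Function.Bijective f} with hS
  let Φ : Equiv.Perm (Fin d) × (Fin d → Fin m) → S := fun p =>
    ⟨GCMaux.Avec ω s p.1 p.2, GCMaux.cmap ω hω hd (GCMaux.Avec ω s p.1 p.2) s,
      GCMaux.cmap_isGCM ω hω hd hm hord _ s,
      GCMaux.cmap_Avec_bij ω hω hd hm hord s hcop p.1 p.2⟩
  have hΦ : Function.Bijective Φ := by
    constructor
    · intro p p' hpp
      have h1 : GCMaux.Avec ω s p.1 p.2 = GCMaux.Avec ω s p'.1 p'.2 :=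
        congrArg Subtype.val hpp
      obtain ⟨hσ, ht⟩ := GCMaux.Avec_inj ω hd hord s p.1 p'.1 p.2 p'.2 h1
      exact Prod.ext hσ ht
    · rintro ⟨a, f, hGCM, hbij⟩
      have hf : f = GCMaux.cmap ω hω hd a s :=
        GCMaux.isGCM_eq_cmap ω hω hd hm hord a s f hGCM
      rw [hf] at hbij
      obtain ⟨σ, t, hσt⟩ := GCMaux.exists_Avec ω hω hd hm hord s hcop a hbij
      exact ⟨(σ, t), Subtype.ext hσt⟩
  have hcard : Nat.card S = Nat.card (Equiv.Perm (Fin d) × (Fin d → Fin m)) :=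
    (Nat.card_congr (Equiv.ofBijective Φ hΦ)).symm
  rw [hcard]
  simp [Nat.card_eq_fintype_card, Fintype.card_perm, Fintype.card_fun]
end

section
/- Let q be a prime power, d a positive divisor of q−1, ω a primitive root of F_q, m := (q−1)/d, and ζ := ω^m (a primitive d-th root of unity in F_q). Note that d·1 is invertible in F_q since d divides q−1. Then for every tuple a = (a_0,…,a_{d−1}) ∈ F_q^d, every tuple r = (r_0,…,r_{d−1}) of integers with 1 ≤ r_i ≤ m, and every x ∈ F_q: f_ω(a,r)(x) = (1/d)·Σ_{i=0}^{d−1} Σ_{j=0}^{d−1} ζ^{−ij}·a_i·x^{j·m + r_i}, where ζ^{−ij} denotes the multiplicative inverse of ζ^{ij}. Explicitly: the right-hand side equals 0 when x = 0, and equals a_i·x^{r_i} when x ∈ C_i (i.e., when (x·ω^{−i})^m = 1). -/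

theorem stmt3' {F : Type*} [Field F] [Fintype F] (ω : Fˣ)
    (hω : ∀ x : Fˣ, x ∈ Subgroup.zpowers ω)
    (d m : ℕ) (hd : 0 < d) (hdm : d * m = Fintype.card F - 1)
    (a : Fin d → F) (r : Fin d → ℕ) (hr : ∀ i, 1 ≤ r i ∧ r i ≤ m)
    (f : F → F) (hf : (f 0 = 0 ∧ ∀ (x : Fˣ) (i : Fin d), (x * (ω ^ (i : ℕ))⁻¹) ^ m = 1 →
    f (x : F) = a i * (x : F) ^ (r i))) :
    ∀ x : F, f x = (d : F)⁻¹ *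
      ∑ i : Fin d, ∑ j : Fin d,
        (((ω : F) ^ m) ^ ((i : ℕ) * (j : ℕ)))⁻¹ * a i * x ^ ((j : ℕ) * m + r i) := by
  classical
  obtain ⟨hf0, hfC⟩ := hf
  have hcardu : Nat.card Fˣ = Fintype.card F - 1 := by
    rw [Nat.card_eq_fintype_card, Fintype.card_units]
  have hωord : orderOf ω = Fintype.card F - 1 := by
    rw [orderOf_eq_card_of_forall_mem_zpowers hω, hcardu]
  have hq1 : 1 ≤ Fintype.card F - 1 := by
    have : 0 < Nat.card Fˣ := Nat.card_pos
    omega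
  have hm : 0 < m := by
    rcases Nat.eq_zero_or_pos m with h | h
    · rw [h, mul_zero] at hdm; omega
    · exact h
  have hω1 : ω ^ (d * m) = 1 := by rw [hdm, ← hωord, pow_orderOf_eq_one]
  have hζd : (ω ^ m) ^ d = 1 := by rw [← pow_mul, mul_comm, hω1]
  have hζord : orderOf (ω ^ m) = d := by
    rw [orderOf_pow, hωord, ← hdm]
    have hg : Nat.gcd (d * m) m = m :=
      Nat.gcd_eq_right ⟨d, mul_comm d m⟩
    rw [hg, Nat.mul_div_cancel _ hm]
  have hdF : (d : F) ≠ 0 := by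
    intro h
    have h2 : ((d * m : ℕ) : F) = -1 := by
      rw [hdm, Nat.cast_sub (by omega), FiniteField.cast_card_eq_zero]
      simp
    rw [Nat.cast_mul, h, zero_mul] at h2
    exact one_ne_zero (neg_eq_zero.mp h2.symm)
  intro x
  rcases eq_or_ne x 0 with rfl | hx0
  · rw [hf0]
    have hz : ∀ i' : Fin d, ∑ j : Fin d,
        (((ω : F) ^ m) ^ ((i' : ℕ) * (j : ℕ)))⁻¹ * a i' * (0:F) ^ ((j : ℕ) * m + r i') = 0 := by
      intro i'
      refine Finset.sum_eq_zero fun j _ => ?_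
      rw [zero_pow (by have := (hr i').1; omega), mul_zero]
    rw [Finset.sum_eq_zero fun i' _ => hz i', mul_zero]
  · -- x is a unit
    set u : Fˣ := Units.mk0 x hx0 with hu
    have hux : (u : F) = x := rfl
    obtain ⟨k, hk0⟩ := mem_powers_iff_mem_zpowers.mpr (hω u)
    have hk : ω ^ k = u := hk0
    set i : Fin d := ⟨k % d, Nat.mod_lt _ hd⟩ with hi
    have hcos : (u * (ω ^ ((i : ℕ)))⁻¹) ^ m = 1 := by
      have h1 : u * (ω ^ ((i : ℕ)))⁻¹ = ω ^ (d * (k / d)) := by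
        rw [← hk]
        conv_lhs => rw [← Nat.mod_add_div k d]
        rw [pow_add]
        simp [hi, mul_comm]
      rw [h1, ← pow_mul, show d * (k / d) * m = (d * m) * (k / d) by ring, pow_mul,
        hω1, one_pow]
    have hfx : f x = a i * x ^ r i := by
      rw [← hux]; exact hfC u i hcos
    have hxω : x = (ω : F) ^ k := by
      rw [← hux, ← hk]; push_cast; ring
    have key : ∀ i' : Fin d,
        ∑ j : Fin d, (((ω : F) ^ m) ^ ((i' : ℕ) * (j : ℕ)))⁻¹ * a i' * x ^ ((j : ℕ) * m + r i')
        = if i' = i then (d : F) * (a i * x ^ r i) else 0 := by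
      intro i'
      set W : Fˣ := ((ω ^ m) ^ (i' : ℕ))⁻¹ * (ω ^ m) ^ k with hW
      have hWv : (W : F) = ((((ω : F) ^ m) ^ (i' : ℕ))⁻¹) * (((ω : F) ^ m) ^ k) := by
        rw [hW]; push_cast; ring
      have step : ∀ j : Fin d,
          (((ω : F) ^ m) ^ ((i' : ℕ) * (j : ℕ)))⁻¹ * a i' * x ^ ((j : ℕ) * m + r i')
          = a i' * x ^ r i' * ((W : F)) ^ (j : ℕ) := by
        intro j
        have hxm : x ^ m = ((ω : F) ^ m) ^ k := by
          rw [hxω, ← pow_mul, mul_comm, pow_mul]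
        have h1 : x ^ ((j : ℕ) * m + r i') = ((x ^ m) ^ (j : ℕ)) * x ^ r i' := by
          rw [pow_add, mul_comm (j : ℕ) m, pow_mul]
        have h2 : (((ω : F) ^ m) ^ ((i' : ℕ) * (j : ℕ)))⁻¹
            = ((((ω : F) ^ m) ^ (i' : ℕ))⁻¹) ^ (j : ℕ) := by
          rw [pow_mul, inv_pow]
        rw [h1, h2, hxm, hWv, mul_pow]
        ring
      rw [Finset.sum_congr rfl fun j _ => step j, ← Finset.mul_sum]
      have hpow : ∀ n : ℕ, ((ω ^ m) ^ n) ^ d = 1 := fun n => by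
        rw [← pow_mul, mul_comm, pow_mul, hζd, one_pow]
      have hWd : W ^ d = 1 := by
        rw [hW, mul_pow, inv_pow, hpow, hpow, inv_one, one_mul]
      have hWiff : W = 1 ↔ i' = i := by
        constructor
        · intro h
          have h5 : (ω ^ m) ^ (i' : ℕ) = (ω ^ m) ^ k := inv_mul_eq_one.mp h
          have hmod := pow_eq_pow_iff_modEq.mp h5
          rw [hζord] at hmod
          have h3 : (i' : ℕ) % d = k % d := hmod
          exact Fin.ext (by rw [show ((i : Fin d) : ℕ) = k % d from rfl,
            ← Nat.mod_eq_of_lt i'.isLt, h3])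
        · intro h
          rw [hW]
          have h4 : (ω ^ m) ^ ((i' : ℕ)) = (ω ^ m) ^ k := by
            rw [h, show ((i : Fin d) : ℕ) = k % d from rfl, ← hζord, pow_mod_orderOf]
          rw [h4, inv_mul_cancel]
      have hsum : ∑ j : Fin d, ((W : F)) ^ (j : ℕ) = if i' = i then (d : F) else 0 := by
        rw [Fin.sum_univ_eq_sum_range (fun j => ((W : F)) ^ j) d]
        by_cases hW1 : W = 1
        · rw [if_pos (hWiff.mp hW1), hW1]
          simp
        · rw [if_neg (fun h => hW1 (hWiff.mpr h))]
          rw [geom_sum_eq (fun h => hW1 (Units.val_eq_one.mp h)) d]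
          have h6 : (W : F) ^ d = 1 := by
            rw [← Units.val_pow_eq_pow_val, hWd, Units.val_one]
          rw [h6, sub_self, zero_div]
      rw [hsum]
      by_cases h : i' = i
      · subst h; rw [if_pos rfl, if_pos rfl]; ring
      · rw [if_neg h, if_neg h, mul_zero]
    rw [Finset.sum_congr rfl fun i' _ => key i', Finset.sum_ite_eq' Finset.univ i
      (fun _ => (d : F) * (a i * x ^ r i)), if_pos (Finset.mem_univ i), hfx,
      ← mul_assoc, inv_mul_cancel₀ hdF, one_mul]

/-- The polynomial form of an index `d` generalized cyclotomic mapping: with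
`ζ := ω^m` a primitive `d`-th root of unity, for every `x ∈ F`,
`f_ω(a,r)(x) = (1/d) · Σ_{i,j=0}^{d-1} ζ^{-ij} · a_i · x^{j·m + r_i}`. -/
theorem stmt3 {F : Type*} [Field F] [Fintype F] (ω : Fˣ)
    (hω : ∀ x : Fˣ, x ∈ Subgroup.zpowers ω)
    (d m : ℕ) (hd : 0 < d) (hdm : d * m = Fintype.card F - 1)
    (a : Fin d → F) (r : Fin d → ℕ) (hr : ∀ i, 1 ≤ r i ∧ r i ≤ m)
    (f : F → F) (hf : IsGCM ω d m a r f) :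
    ∀ x : F, f x = (d : F)⁻¹ *
      ∑ i : Fin d, ∑ j : Fin d,
        (((ω : F) ^ m) ^ ((i : ℕ) * (j : ℕ)))⁻¹ * a i * x ^ ((j : ℕ) * m + r i) := by
  exact stmt3' ω hω d m hd hdm a r hr f hf
end

section
/- Let q be a prime power, d a positive divisor of q−1, ω a primitive root of F_q, and m := (q−1)/d. Let a, a' ∈ F_q^d and let r, r' be tuples of integers with all entries in {1,…,m}. Then the functions f_ω(a,r) and f_ω(a',r') from F_q to F_q are equal if and only if a = a' and r_i = r'_i for every index i ∈ {0,…,d−1} with a_i ≠ 0. -/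
/-- Two index `d` generalized cyclotomic mappings `f_ω(a,r)` and `f_ω(a',r')` (with all
exponents in `{1,…,m}`) are equal as functions if and only if `a = a'` and `r i = r' i`
for every index `i` with `a i ≠ 0`. -/
theorem stmt4 {F : Type*} [Field F] [Fintype F] (ω : Fˣ)
    (hω : ∀ x : Fˣ, x ∈ Subgroup.zpowers ω)
    (d m : ℕ) (hd : 0 < d) (hdm : d * m = Fintype.card F - 1)
    (a a' : Fin d → F) (r r' : Fin d → ℕ)
    (hr : ∀ i, 1 ≤ r i ∧ r i ≤ m) (hr' : ∀ i, 1 ≤ r' i ∧ r' i ≤ m)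
    (f f' : F → F) (hf : IsGCM ω d m a r f) (hf' : IsGCM ω d m a' r' f') :
    f = f' ↔ (a = a' ∧ ∀ i, a i ≠ 0 → r i = r' i) := by
  classical
  have hcard : Nat.card Fˣ = Fintype.card F - 1 := by
    rw [Nat.card_units, Nat.card_eq_fintype_card]
  have hord : orderOf ω = d * m := by
    rw [orderOf_eq_card_of_forall_mem_zpowers hω, hcard, ← hdm]
  have hone : ω ^ (d * m) = 1 := by rw [← hord]; exact pow_orderOf_eq_one ω
  have hm : 0 < m := by
    have h2 : 1 < Fintype.card F := Fintype.one_lt_card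
    rcases Nat.eq_zero_or_pos m with h | h
    · exfalso; rw [h, Nat.mul_zero] at hdm; omega
    · exact h
  set g : Fˣ := ω ^ d with hg
  have hgm : orderOf g = m := by
    rw [hg, orderOf_pow, hord, Nat.gcd_eq_right ⟨m, rfl⟩, Nat.mul_div_cancel_left _ hd]
  have hgC : g ^ m = 1 := by rw [hg, ← pow_mul, hone]
  have modlem : ∀ s t : ℕ, 1 ≤ s → s ≤ m → 1 ≤ t → t ≤ m → s % m = t % m → s = t := by
    intro s t h1 h2 h3 h4 h5
    rcases eq_or_lt_of_le h2 with h | h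
    · rcases eq_or_lt_of_le h4 with h' | h'
      · omega
      · rw [h, Nat.mod_self, Nat.mod_eq_of_lt h'] at h5; omega
    · rcases eq_or_lt_of_le h4 with h' | h'
      · rw [h', Nat.mod_self, Nat.mod_eq_of_lt h] at h5; omega
      · rwa [Nat.mod_eq_of_lt h, Nat.mod_eq_of_lt h'] at h5
  have hcoset : ∀ x : Fˣ, ∃ i : Fin d, (x * (ω ^ (i : ℕ))⁻¹) ^ m = 1 := by
    intro x
    obtain ⟨n, hn⟩ := hω x
    have h1 : 0 ≤ n % d := Int.emod_nonneg n (by exact_mod_cast hd.ne')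
    have h2 : n % d < d := Int.emod_lt_of_pos n (by exact_mod_cast hd)
    refine ⟨⟨(n % d).toNat, by omega⟩, ?_⟩
    have heq : (x * (ω ^ ((n % d).toNat : ℕ))⁻¹) = ω ^ (n - n % d) := by
      rw [← hn, ← zpow_natCast ω ((n % d).toNat), Int.toNat_of_nonneg h1, ← zpow_neg,
        ← zpow_add, ← Int.sub_eq_add_neg]
    simp only [heq]
    rw [← zpow_natCast (ω ^ (n - n % d)) m, ← zpow_mul]
    obtain ⟨k, hk⟩ : (d : ℤ) ∣ n - n % d := Int.dvd_self_sub_of_emod_eq rfl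
    rw [hk]
    have : (d : ℤ) * k * m = ((d * m : ℕ) : ℤ) * k := by push_cast; ring
    rw [this, zpow_mul, zpow_natCast, hone, one_zpow]
  have key : ∀ (_ : f = f') (i : Fin d) (y : Fˣ), y ^ m = 1 →
      a i * ((ω ^ (i : ℕ) * y : Fˣ) : F) ^ r i = a' i * ((ω ^ (i : ℕ) * y : Fˣ) : F) ^ r' i := by
    intro h i y hy
    have hmem : ((ω ^ (i : ℕ) * y) * (ω ^ (i : ℕ))⁻¹) ^ m = 1 := by
      rw [mul_comm (ω ^ (i : ℕ)) y, mul_inv_cancel_right]; exact hy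
    rw [← hf.2 (ω ^ (i : ℕ) * y) i hmem, ← hf'.2 (ω ^ (i : ℕ) * y) i hmem, h]
  constructor
  · intro h
    have main : ∀ i : Fin d, a i = a' i ∧ (a i ≠ 0 → r i = r' i) := by
      intro i
      have e1 := key h i 1 (one_pow m)
      simp only [mul_one] at e1
      by_cases ha : a i = 0
      · have ha' : a' i = 0 := by
          rw [ha, zero_mul] at e1
          have hne : ((ω ^ (i : ℕ) : Fˣ) : F) ^ r' i ≠ 0 := pow_ne_zero _ (Units.ne_zero _)
          rcases mul_eq_zero.mp e1.symm with h' | h'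
          · exact h'
          · exact absurd h' hne
        exact ⟨by rw [ha, ha'], fun h0 => absurd ha h0⟩
      · have ha' : a' i ≠ 0 := by
          intro h'
          rw [h', zero_mul] at e1
          have hne : ((ω ^ (i : ℕ) : Fˣ) : F) ^ r i ≠ 0 := pow_ne_zero _ (Units.ne_zero _)
          exact absurd (mul_eq_zero.mp e1) (by push_neg; exact ⟨ha, hne⟩)
        have e2 := key h i g hgC
        rw [Units.val_mul, mul_pow, mul_pow, ← mul_assoc, ← mul_assoc, e1] at e2
        have hcan : ((g : Fˣ) : F) ^ r i = ((g : Fˣ) : F) ^ r' i := by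
          refine mul_left_cancel₀ ?_ e2
          exact mul_ne_zero ha' (pow_ne_zero _ (Units.ne_zero _))
        have hgu : (g : Fˣ) ^ r i = g ^ r' i := by
          ext; push_cast; exact hcan
        have hmod : r i % m = r' i % m := by
          rw [← hgm]; exact pow_inj_mod.mp hgu
        have hrr : r i = r' i := modlem _ _ (hr i).1 (hr i).2 (hr' i).1 (hr' i).2 hmod
        have haa : a i = a' i := by
          rw [hrr] at e1
          exact mul_right_cancel₀ (pow_ne_zero _ (Units.ne_zero _)) e1
        exact ⟨haa, fun _ => hrr⟩
    exact ⟨funext fun i => (main i).1, fun i h0 => (main i).2 h0⟩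
  · rintro ⟨ha, hrr⟩
    funext x
    by_cases hx : x = 0
    · rw [hx, hf.1, hf'.1]
    · obtain ⟨u, hu⟩ := (Ne.isUnit hx)
      obtain ⟨i, hi⟩ := hcoset u
      rw [← hu]
      by_cases h0 : a i = 0
      · rw [hf.2 u i hi, hf'.2 u i hi, ← ha, h0, zero_mul, zero_mul]
      · rw [hf.2 u i hi, hf'.2 u i hi, ← ha, hrr i h0]
end

section
/- (Pólya) Let Ω be a finite nonempty set, d a positive integer, G a subgroup of the symmetric group Sym(Ω), and P a subgroup of the symmetric group on {0,…,d−1}. Then, in ℚ[x_1,x_2,x_3,…], the equality (1/(|P|·|G|^d))·Σ_{ψ∈P} Σ_{g : {0,…,d−1}→G} CT(w(ψ,g)) = CI(P)[x_1 := CI^{(1)}(G), x_2 := CI^{(2)}(G), …, x_d := CI^{(d)}(G)] holds; that is, the cycle index of the imprimitive wreath product G ≀ P (the group of all permutations w(ψ,g) of Ω×{0,…,d−1} with ψ ∈ P and g_0,…,g_{d−1} ∈ G) is obtained from the cycle index of P by substituting, for each variable x_m (1 ≤ m ≤ d), the polynomial CI^{(m)}(G). -/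
open MvPolynomial Function

/-- The number of cycles of length `ℓ` of a permutation `σ` of a finite set
(fixed points counting as cycles of length `1`): the number of points whose
`σ`-orbit has size `ℓ`, divided by `ℓ`. -/
noncomputable def cycCount {Λ : Type*} (σ : Equiv.Perm Λ) (ℓ : ℕ) : ℕ :=
  Nat.card {x : Λ // Function.minimalPeriod (fun y => σ y) x = ℓ} / ℓ

/-- The cycle type monomial `CT(σ) = ∏_ℓ x_ℓ^{c_ℓ(σ)}` of a permutation of a finite set,
as an element of `ℚ[x_1, x_2, …]` (variables indexed by `ℕ`). -/
noncomputable def CT {Λ : Type*} (σ : Equiv.Perm Λ) : MvPolynomial ℕ ℚ :=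
  ∏ ℓ ∈ Finset.Icc 1 (Nat.card Λ), (X ℓ) ^ cycCount σ ℓ

/-- The cycle index `CI(H) = |H|⁻¹ · Σ_{σ ∈ H} CT(σ)` of a (finite, nonempty) set of
permutations of a finite set. -/
noncomputable def CI {Λ : Type*} (H : Set (Equiv.Perm Λ)) : MvPolynomial ℕ ℚ :=
  (Nat.card H : ℚ)⁻¹ • ∑ᶠ σ ∈ H, CT σ

/-- The imprimitive wreath element `w(ψ,g)`: the permutation of `Ω × {0,…,d−1}` given by
`(x,i) ↦ (g_{ψ(i)}(x), ψ(i))`. -/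
def wreath {Ω : Type*} (d : ℕ) (ψ : Equiv.Perm (Fin d)) (g : Fin d → Equiv.Perm Ω) :
    Equiv.Perm (Ω × Fin d) where
  toFun p := (g (ψ p.2) p.1, ψ p.2)
  invFun p := ((g p.2)⁻¹ p.1, ψ⁻¹ p.2)
  left_inv p := by simp
  right_inv p := by simp

noncomputable def Nc {Λ : Type*} (σ : Equiv.Perm Λ) (ℓ : ℕ) : ℕ :=
  Nat.card {x : Λ // Function.minimalPeriod (fun y => σ y) x = ℓ}

lemma cycCount_def {Λ : Type*} (σ : Equiv.Perm Λ) (ℓ : ℕ) : cycCount σ ℓ = Nc σ ℓ / ℓ := rfl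

lemma perm_mem_periodicPts {Λ : Type*} [Finite Λ] (σ : Equiv.Perm Λ) (x : Λ) :
    x ∈ periodicPts ⇑σ := by
  have : Finite (Equiv.Perm Λ) := by
    have := Fintype.ofFinite Λ
    classical infer_instance
  refine ⟨orderOf σ, orderOf_pos σ, ?_⟩
  simp [IsPeriodicPt, IsFixedPt, Equiv.Perm.iterate_eq_pow, pow_orderOf_eq_one]

lemma perm_mp_pos {Λ : Type*} [Finite Λ] (σ : Equiv.Perm Λ) (x : Λ) :
    0 < Function.minimalPeriod (⇑σ) x :=
  minimalPeriod_pos_of_mem_periodicPts (perm_mem_periodicPts σ x)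

lemma iterate_semiconj {α β : Type*} (e : α → β) (σ : α → α) (τ : β → β)
    (h : ∀ x, τ (e x) = e (σ x)) (n : ℕ) (x : α) : τ^[n] (e x) = e (σ^[n] x) := by
  induction n with
  | zero => rfl
  | succ n ih => rw [Function.iterate_succ_apply', Function.iterate_succ_apply', ih, h]

lemma minimalPeriod_semiconj {α β : Type*} {e : α → β} (he : Function.Injective e)
    {σ : α → α} {τ : β → β} (h : ∀ x, τ (e x) = e (σ x)) (x : α) :
    Function.minimalPeriod τ (e x) = Function.minimalPeriod σ x := by
  have key : ∀ n, IsPeriodicPt τ n (e x) ↔ IsPeriodicPt σ n x := by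
    intro n
    unfold IsPeriodicPt IsFixedPt
    rw [iterate_semiconj e σ τ h]
    exact ⟨fun hh => he hh, fun hh => by rw [hh]⟩
  refine Nat.dvd_antisymm ?_ ?_
  · exact IsPeriodicPt.minimalPeriod_dvd ((key _).2 (isPeriodicPt_minimalPeriod σ x))
  · exact IsPeriodicPt.minimalPeriod_dvd ((key _).1 (isPeriodicPt_minimalPeriod τ (e x)))

lemma Nc_semiconj {α β : Type*} (e : α ≃ β) {σ : Equiv.Perm α} {τ : Equiv.Perm β}
    (h : ∀ x, τ (e x) = e (σ x)) (ℓ : ℕ) : Nc τ ℓ = Nc σ ℓ := by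
  unfold Nc
  apply Nat.card_congr
  refine Equiv.subtypeEquiv e.symm ?_
  intro b
  show minimalPeriod (⇑τ) b = ℓ ↔ minimalPeriod (⇑σ) (e.symm b) = ℓ
  rw [← minimalPeriod_semiconj e.injective h (e.symm b), e.apply_symm_apply]

lemma Nc_le {Λ : Type*} [Finite Λ] (σ : Equiv.Perm Λ) (ℓ : ℕ) : Nc σ ℓ ≤ Nat.card Λ :=
  Nat.card_le_card_of_injective _ Subtype.val_injective

lemma cycCount_eq_zero_of_lt {Λ : Type*} [Finite Λ] (σ : Equiv.Perm Λ) {ℓ : ℕ}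
    (h : Nat.card Λ < ℓ) : cycCount σ ℓ = 0 :=
  Nat.div_eq_of_lt (lt_of_le_of_lt (Nc_le σ ℓ) h)

lemma Nc_dvd {Λ : Type*} [Finite Λ] (σ : Equiv.Perm Λ) (ℓ : ℕ) : ℓ ∣ Nc σ ℓ := by
  classical
  have := Fintype.ofFinite Λ
  set S : Finset Λ := Finset.univ.filter (fun x => Function.minimalPeriod (⇑σ) x = ℓ) with hS
  have hNc : Nc σ ℓ = S.card := by
    rw [Nc, Nat.card_eq_fintype_card, Fintype.card_subtype]
  set f : Λ → Finset Λ := fun x => (Finset.range ℓ).image (fun k => (σ ^ k) x) with hf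
  -- basic: any iterate of a point of minimal period ℓ lies in its orbit finset
  have hsub : ∀ z : Λ, Function.minimalPeriod (⇑σ) z = ℓ → ∀ j : ℕ, ((σ ^ j) z) ∈ f z := by
    intro z hz j
    simp only [hf, Finset.mem_image, Finset.mem_range]
    refine ⟨j % ℓ, Nat.mod_lt _ (hz ▸ perm_mp_pos σ z), ?_⟩
    have := iterate_mod_minimalPeriod_eq (f := ⇑σ) (x := z) (n := j)
    rw [hz] at this
    simpa only [Equiv.Perm.iterate_eq_pow] using this
  have horb : ∀ x ∈ S, ∀ y ∈ f x, y ∈ S ∧ f y = f x := by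
    intro x hx y hy
    simp only [hf, Finset.mem_image, Finset.mem_range] at hy
    obtain ⟨k, hk, rfl⟩ := hy
    have hmpx : Function.minimalPeriod (⇑σ) x = ℓ := by simpa [hS] using hx
    have hmpy : Function.minimalPeriod (⇑σ) ((σ ^ k) x) = ℓ := by
      rw [← Equiv.Perm.iterate_eq_pow]
      rw [minimalPeriod_apply_iterate (perm_mem_periodicPts σ x) k, hmpx]
    have hper : (σ ^ ℓ) x = x := by
      have := isPeriodicPt_minimalPeriod (⇑σ) x
      rw [hmpx] at this
      simpa only [IsPeriodicPt, IsFixedPt, Equiv.Perm.iterate_eq_pow] using this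
    refine ⟨by simpa [hS] using hmpy, ?_⟩
    apply Finset.Subset.antisymm
    · intro w hw
      simp only [hf, Finset.mem_image, Finset.mem_range] at hw
      obtain ⟨j, hj, rfl⟩ := hw
      have : (σ ^ j) ((σ ^ k) x) = (σ ^ (j + k)) x := by
        rw [← Equiv.Perm.mul_apply, ← pow_add]
      rw [this]
      exact hsub x hmpx (j + k)
    · intro w hw
      simp only [hf, Finset.mem_image, Finset.mem_range] at hw
      obtain ⟨j, hj, rfl⟩ := hw
      have key : (σ ^ j) x = (σ ^ (j + (ℓ - k))) ((σ ^ k) x) := by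
        rw [← Equiv.Perm.mul_apply, ← pow_add]
        have h1 : j + (ℓ - k) + k = j + ℓ := by omega
        rw [h1, pow_add, Equiv.Perm.mul_apply, hper]
      rw [key]
      exact hsub _ hmpy (j + (ℓ - k))
  -- card of orbit is ℓ
  have hcardorb : ∀ x ∈ S, (f x).card = ℓ := by
    intro x hx
    have hmpx : Function.minimalPeriod (⇑σ) x = ℓ := by simpa [hS] using hx
    rw [hf]
    rw [Finset.card_image_of_injOn, Finset.card_range]
    intro a ha b hb hab
    simp only [Finset.coe_range, Set.mem_Iio] at ha hb
    have := iterate_injOn_Iio_minimalPeriod (f := ⇑σ) (x := x)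
      (by rw [hmpx]; exact ha) (by rw [hmpx]; exact hb)
    simp only [Equiv.Perm.iterate_eq_pow] at this
    exact this hab
  -- fiberwise counting
  have hcount := Finset.card_eq_sum_card_fiberwise (s := S) (t := S.image f) (f := f)
    (fun x hx => Finset.mem_image_of_mem f hx)
  rw [hNc, hcount]
  apply Finset.dvd_sum
  intro t ht
  simp only [Finset.mem_image] at ht
  obtain ⟨x, hx, rfl⟩ := ht
  have : S.filter (fun y => f y = f x) = f x := by
    apply Finset.Subset.antisymm
    · intro y hy
      simp only [Finset.mem_filter] at hy
      rw [← hy.2]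
      have : (σ ^ 0) y ∈ f y := hsub y (by simpa [hS] using hy.1) 0
      simpa using this
    · intro y hy
      obtain ⟨hy1, hy2⟩ := horb x hx y hy
      simp only [Finset.mem_filter]
      exact ⟨hy1, hy2⟩
  rw [this, hcardorb x hx]

lemma Nc_sumCongr {α β : Type*} [Finite α] [Finite β] (σ : Equiv.Perm α) (τ : Equiv.Perm β) (ℓ : ℕ) :
    Nc (Equiv.sumCongr σ τ) ℓ = Nc σ ℓ + Nc τ ℓ := by
  unfold Nc
  rw [← Nat.card_sum]
  apply Nat.card_congr
  refine (Equiv.subtypeSum.trans (Equiv.sumCongr (Equiv.subtypeEquivRight ?_)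
    (Equiv.subtypeEquivRight ?_)))
  · intro a
    show minimalPeriod (⇑(Equiv.sumCongr σ τ)) (Sum.inl a) = ℓ ↔ minimalPeriod (⇑σ) a = ℓ
    rw [minimalPeriod_semiconj (Sum.inl_injective) (fun x => rfl) a]
  · intro b
    show minimalPeriod (⇑(Equiv.sumCongr σ τ)) (Sum.inr b) = ℓ ↔ minimalPeriod (⇑τ) b = ℓ
    rw [minimalPeriod_semiconj (Sum.inr_injective) (fun x => rfl) b]

lemma cycCount_semiconj {α β : Type*} (e : α ≃ β) {σ : Equiv.Perm α} {τ : Equiv.Perm β}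
    (h : ∀ x, τ (e x) = e (σ x)) (ℓ : ℕ) : cycCount τ ℓ = cycCount σ ℓ := by
  rw [cycCount_def, cycCount_def, Nc_semiconj e h]

lemma cycCount_sumCongr {α β : Type*} [Finite α] [Finite β]
    (σ : Equiv.Perm α) (τ : Equiv.Perm β) {ℓ : ℕ} (hℓ : 0 < ℓ) :
    cycCount (Equiv.sumCongr σ τ) ℓ = cycCount σ ℓ + cycCount τ ℓ := by
  simp only [cycCount_def, Nc_sumCongr]
  obtain ⟨c, hc⟩ := Nc_dvd σ ℓ
  rw [hc, Nat.mul_add_div hℓ, Nat.mul_div_cancel_left _ hℓ]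

/-- CT as a product over any sufficiently large range. -/
lemma CT_eq_prod {Λ : Type*} [Finite Λ] (σ : Equiv.Perm Λ) {n : ℕ} (hn : Nat.card Λ ≤ n) :
    CT σ = ∏ ℓ ∈ Finset.Icc 1 n, (X ℓ : MvPolynomial ℕ ℚ) ^ cycCount σ ℓ := by
  rw [CT]
  apply Finset.prod_subset
  · exact Finset.Icc_subset_Icc_right hn
  · intro ℓ hℓ hℓ'
    simp only [Finset.mem_Icc] at hℓ hℓ'
    have : Nat.card Λ < ℓ := by omega
    rw [cycCount_eq_zero_of_lt σ this, pow_zero]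

lemma CT_semiconj {α β : Type*} [Finite α] (e : α ≃ β) {σ : Equiv.Perm α} {τ : Equiv.Perm β}
    (h : ∀ x, τ (e x) = e (σ x)) : CT τ = CT σ := by
  have : Finite β := Finite.of_equiv α e
  have hcard : Nat.card β = Nat.card α := Nat.card_congr e.symm
  rw [CT, CT, hcard]
  exact Finset.prod_congr rfl fun ℓ _ => by rw [cycCount_semiconj e h]

lemma CT_sumCongr {α β : Type*} [Finite α] [Finite β] (σ : Equiv.Perm α) (τ : Equiv.Perm β) :
    CT (Equiv.sumCongr σ τ) = CT σ * CT τ := by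
  have h1 : Nat.card (α ⊕ β) = Nat.card α + Nat.card β := Nat.card_sum
  rw [CT_eq_prod (Equiv.sumCongr σ τ) (le_of_eq h1),
    CT_eq_prod σ (Nat.le_add_right _ (Nat.card β)),
    CT_eq_prod τ (Nat.le_add_left _ (Nat.card α)), ← Finset.prod_mul_distrib]
  apply Finset.prod_congr rfl
  intro ℓ hℓ
  simp only [Finset.mem_Icc] at hℓ
  rw [cycCount_sumCongr σ τ hℓ.1, pow_add]

/-- general imprimitive wreath element over any index type -/
def W {Ω I : Type*} (ψ : Equiv.Perm I) (g : I → Equiv.Perm Ω) : Equiv.Perm (Ω × I) where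
  toFun p := (g (ψ p.2) p.1, ψ p.2)
  invFun p := ((g p.2)⁻¹ p.1, ψ⁻¹ p.2)
  left_inv p := by simp
  right_inv p := by simp

lemma W_apply {Ω I : Type*} (ψ : Equiv.Perm I) (g : I → Equiv.Perm Ω) (p : Ω × I) :
    W ψ g p = (g (ψ p.2) p.1, ψ p.2) := rfl

lemma W_mul {Ω I : Type*} (ψ ψ' : Equiv.Perm I) (g g' : I → Equiv.Perm Ω) :
    W ψ g * W ψ' g' = W (ψ * ψ') (fun i => g i * g' (ψ⁻¹ i)) := by
  ext p
  · show (g (ψ (ψ' p.2)) (g' (ψ' p.2) p.1), _).1 = ((g ((ψ * ψ') p.2) * g' (ψ⁻¹ ((ψ * ψ') p.2))) p.1, _).1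
    simp [Equiv.Perm.mul_apply]
  · rfl

/-- ordered partial product along the inverse orbit -/
def pprodW {I M : Type*} [Monoid M] (ψ : Equiv.Perm I) (g : I → M) : ℕ → I → M
  | 0, _ => 1
  | k+1, i => g i * pprodW ψ g k (ψ⁻¹ i)

lemma map_pprodW {I M N : Type*} [Monoid M] [Monoid N] (f : M →* N) (ψ : Equiv.Perm I)
    (g : I → M) (k : ℕ) (i : I) : f (pprodW ψ g k i) = pprodW ψ (fun j => f (g j)) k i := by
  induction k generalizing i with
  | zero => simp [pprodW]
  | succ k ih => simp [pprodW, ih]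

lemma W_pow {Ω I : Type*} (ψ : Equiv.Perm I) (g : I → Equiv.Perm Ω) (k : ℕ) :
    (W ψ g) ^ k = W (ψ ^ k) (pprodW ψ g k) := by
  induction k with
  | zero =>
    ext p
    · show p.1 = ((1 : Equiv.Perm Ω) p.1, _).1
      rfl
    · rfl
  | succ k ih =>
    rw [pow_succ', ih, W_mul, ← pow_succ']
    congr 1

lemma pprodW_add {I M : Type*} [Monoid M] (ψ : Equiv.Perm I) (g : I → M) (a b : ℕ) (i : I) :
    pprodW ψ g (a + b) i = pprodW ψ g a i * pprodW ψ g b ((ψ⁻¹ ^ a) i) := by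
  induction a generalizing i with
  | zero => simp [pprodW]
  | succ a ih =>
    have h1 : a + 1 + b = (a + b) + 1 := by omega
    rw [h1]
    show g i * pprodW ψ g (a + b) (ψ⁻¹ i) = (g i * pprodW ψ g a (ψ⁻¹ i)) * _
    rw [ih (ψ⁻¹ i), mul_assoc, pow_succ]
    rfl

lemma pprodW_succ' {I M : Type*} [Monoid M] (ψ : Equiv.Perm I) (g : I → M) (k : ℕ) (i : I) :
    pprodW ψ g (k + 1) i = pprodW ψ g k i * g ((ψ⁻¹ ^ k) i) := by
  rw [pprodW_add]
  simp [pprodW]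

lemma inv_pow_fixed {I : Type*} {ψ : Equiv.Perm I} {i : I} {n : ℕ} (h : (ψ ^ n) i = i) :
    (ψ⁻¹ ^ n) i = i := by
  rw [inv_pow]
  exact (Equiv.symm_apply_eq _).2 h.symm

lemma pow_fixed_mul {I : Type*} {ψ : Equiv.Perm I} {i : I} {m : ℕ} (h : (ψ ^ m) i = i) (q : ℕ) :
    (ψ ^ (m * q)) i = i := by
  induction q with
  | zero => simp
  | succ q ih =>
    rw [Nat.mul_succ, pow_add, Equiv.Perm.mul_apply, h, ih]

lemma pprodW_mul_of_fixed {I M : Type*} [Monoid M] {ψ : Equiv.Perm I} (g : I → M) {m : ℕ} {i : I}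
    (h : (ψ ^ m) i = i) (q : ℕ) : pprodW ψ g (m * q) i = (pprodW ψ g m i) ^ q := by
  induction q with
  | zero => simp [pprodW]
  | succ q ih =>
    rw [Nat.mul_succ, pprodW_add, ih, inv_pow_fixed (pow_fixed_mul h q), pow_succ]

lemma pprodW_congr {I M : Type*} [Monoid M] {ψ : Equiv.Perm I} {g₁ g₂ : I → M} {k : ℕ} {i : I}
    (h : ∀ j < k, g₁ ((ψ⁻¹ ^ j) i) = g₂ ((ψ⁻¹ ^ j) i)) : pprodW ψ g₁ k i = pprodW ψ g₂ k i := by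
  induction k generalizing i with
  | zero => rfl
  | succ k ih =>
    show g₁ i * pprodW ψ g₁ k (ψ⁻¹ i) = g₂ i * pprodW ψ g₂ k (ψ⁻¹ i)
    have h0 : g₁ i = g₂ i := by simpa using h 0 (Nat.succ_pos k)
    rw [h0, ih]
    intro j hj
    have := h (j + 1) (by omega)
    rw [pow_succ] at this
    simpa using this

lemma isPeriodicPt_W_iff {Ω I : Type*} (ψ : Equiv.Perm I) (g : I → Equiv.Perm Ω)
    (x : Ω) (i : I) (k : ℕ) :
    IsPeriodicPt ⇑(W ψ g) k (x, i) ↔ ((ψ ^ k) i = i ∧ (pprodW ψ g k i) x = x) := by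
  unfold IsPeriodicPt IsFixedPt
  rw [Equiv.Perm.iterate_eq_pow, W_pow, W_apply, Prod.mk.injEq]
  constructor
  · rintro ⟨h1, h2⟩
    rw [h2] at h1
    exact ⟨h2, h1⟩
  · rintro ⟨h2, h1⟩
    refine ⟨?_, h2⟩
    rw [h2]
    exact h1

lemma mp_W {Ω I : Type*} (ψ : Equiv.Perm I) (g : I → Equiv.Perm Ω) (x : Ω) (i : I) :
    minimalPeriod ⇑(W ψ g) (x, i) =
      minimalPeriod ⇑ψ i * minimalPeriod ⇑(pprodW ψ g (minimalPeriod ⇑ψ i) i) x := by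
  set m := minimalPeriod ⇑ψ i with hm
  set τ := pprodW ψ g m i with hτ
  have hfix : (ψ ^ m) i = i := by
    have := isPeriodicPt_minimalPeriod ⇑ψ i
    simpa only [IsPeriodicPt, IsFixedPt, Equiv.Perm.iterate_eq_pow] using this
  apply Nat.dvd_antisymm
  · apply IsPeriodicPt.minimalPeriod_dvd
    rw [isPeriodicPt_W_iff]
    refine ⟨pow_fixed_mul hfix _, ?_⟩
    rw [pprodW_mul_of_fixed g hfix]
    have := isPeriodicPt_minimalPeriod ⇑τ x
    simpa only [IsPeriodicPt, IsFixedPt, Equiv.Perm.iterate_eq_pow] using this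
  · have h := isPeriodicPt_minimalPeriod ⇑(W ψ g) (x, i)
    rw [isPeriodicPt_W_iff] at h
    obtain ⟨h1, h2⟩ := h
    have hdvd : m ∣ minimalPeriod ⇑(W ψ g) (x, i) := by
      apply IsPeriodicPt.minimalPeriod_dvd
      simpa only [IsPeriodicPt, IsFixedPt, Equiv.Perm.iterate_eq_pow] using h1
    obtain ⟨q, hq⟩ := hdvd
    rw [hq] at h2 ⊢
    rw [pprodW_mul_of_fixed g hfix] at h2
    apply mul_dvd_mul_left m
    apply IsPeriodicPt.minimalPeriod_dvd
    simpa only [IsPeriodicPt, IsFixedPt, Equiv.Perm.iterate_eq_pow] using h2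

section Cycle

variable {Ω I : Type*}

/-- For a transitive permutation, minimal period equals the cardinality. -/
lemma card_eq_mp_of_trans [Fintype I] (ψ : Equiv.Perm I) (i₀ : I)
    (htrans : ∀ j : I, ∃ k : ℕ, (ψ ^ k) i₀ = j) :
    Fintype.card I = minimalPeriod ⇑ψ i₀ := by
  have hbij : Function.Bijective (fun k : Fin (minimalPeriod ⇑ψ i₀) => (ψ ^ (k : ℕ)) i₀) := by
    constructor
    · intro a b hab
      have := iterate_injOn_Iio_minimalPeriod (f := ⇑ψ) (x := i₀)
        (Set.mem_Iio.2 a.2) (Set.mem_Iio.2 b.2)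
      simp only [Equiv.Perm.iterate_eq_pow] at this
      exact Fin.ext (this hab)
    · intro j
      obtain ⟨k, hk⟩ := htrans j
      refine ⟨⟨k % minimalPeriod ⇑ψ i₀, Nat.mod_lt _ (perm_mp_pos ψ i₀)⟩, ?_⟩
      have := iterate_mod_minimalPeriod_eq (f := ⇑ψ) (x := i₀) (n := k)
      simp only [Equiv.Perm.iterate_eq_pow] at this
      simpa [this] using hk
  rw [← Fintype.card_fin (minimalPeriod ⇑ψ i₀)]
  exact (Fintype.card_of_bijective hbij).symm

lemma mp_const_of_trans [Fintype I] (ψ : Equiv.Perm I) (i₀ : I)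
    (htrans : ∀ j : I, ∃ k : ℕ, (ψ ^ k) i₀ = j) (j : I) :
    minimalPeriod ⇑ψ j = Fintype.card I := by
  obtain ⟨k, rfl⟩ := htrans j
  rw [card_eq_mp_of_trans ψ i₀ htrans, ← Equiv.Perm.iterate_eq_pow]
  exact minimalPeriod_apply_iterate (perm_mem_periodicPts ψ i₀) k

lemma cycCount_of_trans [Fintype I] (ψ : Equiv.Perm I) (i₀ : I)
    (htrans : ∀ j : I, ∃ k : ℕ, (ψ ^ k) i₀ = j) (ℓ : ℕ) :
    cycCount ψ ℓ = if ℓ = Fintype.card I then 1 else 0 := by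
  have hpos : 0 < Fintype.card I := Fintype.card_pos_iff.2 ⟨i₀⟩
  rw [cycCount_def, Nc]
  split_ifs with h
  · subst h
    have : ∀ j : I, minimalPeriod (fun y => ψ y) j = Fintype.card I :=
      fun j => mp_const_of_trans ψ i₀ htrans j
    rw [Nat.card_congr (Equiv.subtypeUnivEquiv this), Nat.card_eq_fintype_card,
      Nat.div_self hpos]
  · have : IsEmpty {x : I // minimalPeriod (fun y => ψ y) x = ℓ} := by
      refine ⟨fun z => h ?_⟩
      rw [← z.2]
      exact mp_const_of_trans ψ i₀ htrans z.1
    rw [Nat.card_of_isEmpty, Nat.zero_div]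

/-- conjugation step for the cycle products -/
lemma Nc_pprodW_step [Finite I] (ψ : Equiv.Perm I) (g : I → Equiv.Perm Ω) {m : ℕ}
    (hm : 0 < m) {j : I} (hfix : (ψ ^ m) j = j) (ℓ : ℕ) :
    Nc (pprodW ψ g m (ψ j)) ℓ = Nc (pprodW ψ g m j) ℓ := by
  -- pprodW m (ψ j) * g (ψ j) = g (ψ j) * pprodW m j
  have hconj : pprodW ψ g m (ψ j) * g (ψ j) = g (ψ j) * pprodW ψ g m j := by
    obtain ⟨m', rfl⟩ : ∃ m', m = m' + 1 := ⟨m - 1, by omega⟩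
    have h1 : pprodW ψ g (m' + 1) (ψ j) = g (ψ j) * pprodW ψ g m' j := by
      show g (ψ j) * pprodW ψ g m' (ψ⁻¹ (ψ j)) = _
      rw [← Equiv.Perm.mul_apply, inv_mul_cancel, Equiv.Perm.one_apply]
    have h2 : (ψ⁻¹ ^ m') j = ψ j := by
      have h3 : (ψ ^ m') (ψ j) = j := by
        rw [← Equiv.Perm.mul_apply, ← pow_succ]
        exact hfix
      calc (ψ⁻¹ ^ m') j = (ψ⁻¹ ^ m') ((ψ ^ m') (ψ j)) := by rw [h3]
        _ = ψ j := by rw [inv_pow, ← Equiv.Perm.mul_apply, inv_mul_cancel, Equiv.Perm.one_apply]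
    rw [h1, pprodW_succ', h2, mul_assoc]
  apply Nc_semiconj (g (ψ j) : Ω ≃ Ω)
  intro x
  show (pprodW ψ g m (ψ j)) ((g (ψ j)) x) = (g (ψ j)) ((pprodW ψ g m j) x)
  rw [← Equiv.Perm.mul_apply, ← Equiv.Perm.mul_apply, hconj]

lemma Nc_pprodW_const [Fintype I] (ψ : Equiv.Perm I) (g : I → Equiv.Perm Ω) (i₀ : I)
    (htrans : ∀ j : I, ∃ k : ℕ, (ψ ^ k) i₀ = j) (j : I) (ℓ : ℕ) :
    Nc (pprodW ψ g (Fintype.card I) j) ℓ = Nc (pprodW ψ g (Fintype.card I) i₀) ℓ := by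
  have hpos : 0 < Fintype.card I := Fintype.card_pos_iff.2 ⟨i₀⟩
  have hfix : ∀ j : I, (ψ ^ Fintype.card I) j = j := by
    intro j
    have := isPeriodicPt_minimalPeriod ⇑ψ j
    rw [mp_const_of_trans ψ i₀ htrans j] at this
    simpa only [IsPeriodicPt, IsFixedPt, Equiv.Perm.iterate_eq_pow] using this
  obtain ⟨k, rfl⟩ := htrans j
  induction k with
  | zero => simp
  | succ k ih =>
    have : (ψ ^ (k + 1)) i₀ = ψ ((ψ ^ k) i₀) := by
      rw [pow_succ', Equiv.Perm.mul_apply]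
    rw [this, Nc_pprodW_step ψ g hpos (hfix ((ψ ^ k) i₀)) ℓ, ih]

end Cycle

lemma CT_W_cycle {Ω I : Type*} [Fintype Ω] [Fintype I] (ψ : Equiv.Perm I)
    (g : I → Equiv.Perm Ω) (i₀ : I) (htrans : ∀ j : I, ∃ k : ℕ, (ψ ^ k) i₀ = j) :
    CT (W ψ g) = rename (fun j => j * Fintype.card I)
      (CT (pprodW ψ g (Fintype.card I) i₀)) := by
  classical
  set m := Fintype.card I with hmdef
  set σ := pprodW ψ g m i₀ with hσ
  have hpos : 0 < m := Fintype.card_pos_iff.2 ⟨i₀⟩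
  have hmpW : ∀ (x : Ω) (i : I), minimalPeriod ⇑(W ψ g) (x, i) =
      m * minimalPeriod ⇑(pprodW ψ g m i) x := by
    intro x i
    rw [mp_W, mp_const_of_trans ψ i₀ htrans i]
  have hNcW : ∀ ℓ : ℕ, Nc (W ψ g) (ℓ * m) = m * Nc σ ℓ := by
    intro ℓ
    rw [Nc]
    have e1 : {p : Ω × I // minimalPeriod (fun y => (W ψ g) y) p = ℓ * m} ≃
        Σ i : I, {x : Ω // minimalPeriod (fun y => (pprodW ψ g m i) y) x = ℓ} := by
      refine (Equiv.subtypeEquiv (Equiv.prodComm Ω I) ?_).trans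
        (Equiv.subtypeProdEquivSigmaSubtype (fun (i : I) (x : Ω) =>
          minimalPeriod (fun y => (pprodW ψ g m i) y) x = ℓ))
      intro p
      show minimalPeriod ⇑(W ψ g) p = ℓ * m ↔
        minimalPeriod ⇑(pprodW ψ g m p.2) p.1 = ℓ
      rw [hmpW p.1 p.2, mul_comm ℓ m]
      exact ⟨fun h => Nat.eq_of_mul_eq_mul_left hpos h, fun h => by rw [h]⟩
    rw [Nat.card_congr e1, Nat.card_eq_fintype_card, Fintype.card_sigma]
    have hc : ∀ i : I, Fintype.card {x : Ω // minimalPeriod (fun y => (pprodW ψ g m i) y) x = ℓ}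
        = Nc σ ℓ := by
      intro i
      rw [← Nat.card_eq_fintype_card]
      exact Nc_pprodW_const ψ g i₀ htrans i ℓ
    rw [Finset.sum_congr rfl (fun i _ => hc i), Finset.sum_const, Finset.card_univ,
      smul_eq_mul]
  have hcycW : ∀ ℓ : ℕ, cycCount (W ψ g) (ℓ * m) = cycCount σ ℓ := by
    intro ℓ
    rw [cycCount_def, cycCount_def, hNcW ℓ, mul_comm ℓ m, Nat.mul_div_mul_left _ _ hpos]
  have hcycW0 : ∀ L : ℕ, ¬ (m ∣ L) → cycCount (W ψ g) L = 0 := by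
    intro L hL
    rw [cycCount_def, Nc]
    have he : IsEmpty {p : Ω × I // minimalPeriod (fun y => (W ψ g) y) p = L} := by
      refine ⟨fun z => hL ?_⟩
      rw [← z.2]
      exact ⟨_, hmpW z.1.1 z.1.2⟩
    rw [Nat.card_of_isEmpty, Nat.zero_div]
  have hcardprod : Nat.card (Ω × I) = Fintype.card Ω * m := by
    rw [Nat.card_prod, Nat.card_eq_fintype_card, Nat.card_eq_fintype_card]
  have hrename : rename (fun j => j * m) (CT σ) =
      ∏ ℓ ∈ Finset.Icc 1 (Fintype.card Ω), (X (ℓ * m) : MvPolynomial ℕ ℚ) ^ cycCount σ ℓ := by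
    rw [CT, Nat.card_eq_fintype_card, map_prod]
    exact Finset.prod_congr rfl fun ℓ _ => by rw [map_pow, rename_X]
  have h2 : ∏ ℓ ∈ Finset.Icc 1 (Fintype.card Ω), (X (ℓ * m) : MvPolynomial ℕ ℚ) ^ cycCount σ ℓ
      = ∏ L ∈ (Finset.Icc 1 (Fintype.card Ω)).image (fun ℓ => ℓ * m),
          (X L : MvPolynomial ℕ ℚ) ^ cycCount (W ψ g) L := by
    rw [Finset.prod_image (fun a _ b _ hab => Nat.eq_of_mul_eq_mul_right hpos hab)]
    exact Finset.prod_congr rfl fun ℓ _ => by rw [hcycW]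
  rw [CT, hcardprod, hrename, h2]
  refine (Finset.prod_subset ?_ ?_).symm
  · intro L hL
    simp only [Finset.mem_image, Finset.mem_Icc] at hL
    obtain ⟨ℓ, ⟨h1, h2⟩, rfl⟩ := hL
    simp only [Finset.mem_Icc]
    constructor
    · calc 1 = 1 * 1 := (one_mul 1).symm
        _ ≤ ℓ * m := Nat.mul_le_mul h1 hpos
    · exact Nat.mul_le_mul_right m h2
  · intro L hL hL'
    simp only [Finset.mem_Icc] at hL
    by_cases hdvd : m ∣ L
    · obtain ⟨ℓ, rfl⟩ := hdvd
      have hℓ1 : 1 ≤ ℓ := by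
        rcases Nat.eq_zero_or_pos ℓ with h | h
        · subst h; omega
        · exact h
      have hℓ2 : Fintype.card Ω < ℓ := by
        by_contra hcon
        push_neg at hcon
        exact hL' (Finset.mem_image.2 ⟨ℓ, Finset.mem_Icc.2 ⟨hℓ1, hcon⟩, mul_comm ℓ m⟩)
      rw [mul_comm m ℓ, hcycW ℓ, cycCount_eq_zero_of_lt σ (by rwa [Nat.card_eq_fintype_card]),
        pow_zero]
    · rw [hcycW0 L hdvd, pow_zero]

lemma sum_CT_subgroup {Ω : Type*} [Fintype Ω] (G : Subgroup (Equiv.Perm Ω)) [Fintype ↥G] :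
    ∑ σ : ↥G, CT (σ : Equiv.Perm Ω) = (Nat.card ↥G : ℚ) • CI (G : Set (Equiv.Perm Ω)) := by
  classical
  have h1 : ∑ᶠ σ ∈ (G : Set (Equiv.Perm Ω)), CT σ = ∑ σ : ↥G, CT (σ : Equiv.Perm Ω) := by
    rw [finsum_mem_eq_toFinset_sum CT (G : Set (Equiv.Perm Ω))]
    exact Finset.sum_subtype _ (fun x => by simp [Set.mem_toFinset]) CT
  have hcard : (Nat.card ↥(G : Set (Equiv.Perm Ω))) = Nat.card ↥G := rfl
  rw [CI, h1, hcard, smul_smul, mul_inv_cancel₀, one_smul]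
  have : 0 < Nat.card ↥G := Nat.card_pos
  exact_mod_cast this.ne'

lemma keyB {Ω : Type*} [Fintype Ω] (G : Subgroup (Equiv.Perm Ω)) [Fintype ↥G]
    (I : Type*) [Fintype I] [DecidableEq I]
    (ψ : Equiv.Perm I) (i₀ : I) (htrans : ∀ j : I, ∃ k : ℕ, (ψ ^ k) i₀ = j) :
    ∑ g : I → ↥G, CT (W ψ (fun i => (g i : Equiv.Perm Ω)))
      = ((Nat.card ↥G : ℚ) ^ (Fintype.card I)) •
        rename (fun j => j * Fintype.card I) (CI (G : Set (Equiv.Perm Ω))) := by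
  classical
  set m := Fintype.card I with hmdef
  have hpos : 0 < m := Fintype.card_pos_iff.2 ⟨i₀⟩
  -- the G-valued product map
  set F : (I → ↥G) → ↥G := fun g => pprodW ψ g m i₀ with hF
  set φ : ↥G → MvPolynomial ℕ ℚ :=
    fun σ => rename (fun j => j * m) (CT (σ : Equiv.Perm Ω)) with hφ
  have hct : ∀ g : I → ↥G, CT (W ψ (fun i => (g i : Equiv.Perm Ω))) = φ (F g) := by
    intro g
    rw [CT_W_cycle ψ (fun i => (g i : Equiv.Perm Ω)) i₀ htrans, hφ, hF]
    have hp : (pprodW ψ (fun i => (g i : Equiv.Perm Ω)) (Fintype.card I) i₀)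
        = ((pprodW ψ g (Fintype.card I) i₀ : ↥G) : Equiv.Perm Ω) :=
      (map_pprodW G.subtype ψ g (Fintype.card I) i₀).symm
    rw [hp]
  rw [Finset.sum_congr rfl (fun g _ => hct g)]
  -- reindex by splitting at i₀
  set E := Equiv.funSplitAt i₀ ↥G with hE
  rw [← Equiv.sum_comp E.symm (fun g => φ (F g)), Fintype.sum_prod_type]
  -- evaluate F on E.symm (a, r)
  have hsymm_at : ∀ (a : ↥G) (r : {j // j ≠ i₀} → ↥G), E.symm (a, r) i₀ = a := by
    intro a r
    simp [hE, Equiv.funSplitAt, Equiv.piSplitAt]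
  have hsymm_ne : ∀ (a : ↥G) (r : {j // j ≠ i₀} → ↥G) (j : I) (h : j ≠ i₀),
      E.symm (a, r) j = r ⟨j, h⟩ := by
    intro a r j h
    simp [hE, Equiv.funSplitAt, Equiv.piSplitAt, h]
  have hne : ∀ j : ℕ, j < m - 1 → (ψ⁻¹ ^ (j + 1)) i₀ ≠ i₀ := by
    intro j hj hcon
    have h1 : (ψ ^ (j + 1)) i₀ = i₀ := by
      rw [inv_pow] at hcon
      have := congrArg (⇑(ψ ^ (j + 1))) hcon
      rw [← Equiv.Perm.mul_apply, mul_inv_cancel, Equiv.Perm.one_apply] at this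
      exact this.symm
    have h2 : minimalPeriod ⇑ψ i₀ ∣ (j + 1) := by
      apply IsPeriodicPt.minimalPeriod_dvd
      simpa only [IsPeriodicPt, IsFixedPt, Equiv.Perm.iterate_eq_pow] using h1
    rw [← card_eq_mp_of_trans ψ i₀ htrans, ← hmdef] at h2
    have := Nat.le_of_dvd (Nat.succ_pos j) h2
    omega
  have hFsplit : ∀ (a : ↥G) (r : {j // j ≠ i₀} → ↥G),
      F (E.symm (a, r)) = a * pprodW ψ (E.symm (1, r)) (m - 1) (ψ⁻¹ i₀) := by
    intro a r
    obtain ⟨m', hm'⟩ : ∃ m', m = m' + 1 := ⟨m - 1, by omega⟩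
    rw [hF, hm']
    show E.symm (a, r) i₀ * pprodW ψ (E.symm (a, r)) m' (ψ⁻¹ i₀) = _
    rw [hsymm_at a r]
    simp only [Nat.add_sub_cancel]
    congr 1
    apply pprodW_congr
    intro j hj
    have hidx : (ψ⁻¹ ^ j) (ψ⁻¹ i₀) = (ψ⁻¹ ^ (j + 1)) i₀ := by
      rw [pow_succ]
      rfl
    have hne' : (ψ⁻¹ ^ j) (ψ⁻¹ i₀) ≠ i₀ := by
      rw [hidx]
      exact hne j (by omega)
    rw [hsymm_ne a r _ hne', hsymm_ne 1 r _ hne']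
  have hinner : ∀ r : {j // j ≠ i₀} → ↥G,
      ∑ a : ↥G, φ (F (E.symm (a, r))) = ∑ σ : ↥G, φ σ := by
    intro r
    rw [Finset.sum_congr rfl (fun a _ => by rw [hFsplit a r])]
    exact Equiv.sum_comp (Equiv.mulRight (pprodW ψ (E.symm (1, r)) (m - 1) (ψ⁻¹ i₀))) φ
  rw [Finset.sum_comm, Finset.sum_congr rfl (fun r _ => hinner r), Finset.sum_const,
    Finset.card_univ]
  have hsum : ∑ σ : ↥G, φ σ = (Nat.card ↥G : ℚ) •
      rename (fun j => j * m) (CI (G : Set (Equiv.Perm Ω))) := by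
    rw [hφ, ← map_sum, sum_CT_subgroup G, map_smul]
  rw [hsum]
  have hcardfun : Fintype.card ({j // j ≠ i₀} → ↥G) = (Nat.card ↥G) ^ (m - 1) := by
    rw [Fintype.card_fun, Nat.card_eq_fintype_card]
    congr 1
    rw [Fintype.card_subtype_compl (p := fun j => j = i₀), Fintype.card_subtype_eq]
  rw [hcardfun, ← Nat.cast_smul_eq_nsmul ℚ, smul_smul, Nat.cast_pow, ← pow_succ]
  congr 2
  omega

lemma key {Ω : Type*} [Fintype Ω] (G : Subgroup (Equiv.Perm Ω)) [Fintype ↥G] :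
    ∀ n : ℕ, ∀ (I : Type) [Fintype I] [DecidableEq I], Fintype.card I = n → ∀ ψ : Equiv.Perm I,
    ∑ g : I → ↥G, CT (W ψ (fun i => (g i : Equiv.Perm Ω)))
      = ((Nat.card ↥G : ℚ) ^ n) • ∏ ℓ ∈ Finset.Icc 1 n,
          (rename (fun j => j * ℓ) (CI (G : Set (Equiv.Perm Ω)))) ^ cycCount ψ ℓ := by
  intro n
  induction n using Nat.strong_induction_on with
  | _ n IH =>
    intro I instI instD hcard ψ
    classical
    rcases Nat.eq_zero_or_pos n with hn | hn
    · subst hn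
      have hempty : IsEmpty I := Fintype.card_eq_zero_iff.1 hcard
      have hCT1 : ∀ g : I → ↥G, CT (W ψ (fun i => (g i : Equiv.Perm Ω))) = 1 := by
        intro g
        rw [CT]
        have hz : Nat.card (Ω × I) = 0 := by
          rw [Nat.card_prod, Nat.card_eq_fintype_card (α := I), hcard, mul_zero]
        rw [hz]
        simp
      rw [Finset.sum_congr rfl (fun g _ => hCT1 g), Finset.sum_const, Finset.card_univ]
      have h1 : Fintype.card (I → ↥G) = 1 := by
        rw [Fintype.card_fun, hcard, pow_zero]
      rw [h1, one_smul]
      simp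
    · -- pick a base point and split off its cycle
      have : Nonempty I := Fintype.card_pos_iff.1 (hcard ▸ hn)
      obtain ⟨i₀⟩ := this
      set p : I → Prop := fun j => ∃ k : ℕ, (ψ ^ k) i₀ = j with hpdef
      have hfix : (ψ ^ minimalPeriod ⇑ψ i₀) i₀ = i₀ := by
        have := isPeriodicPt_minimalPeriod ⇑ψ i₀
        simpa only [IsPeriodicPt, IsFixedPt, Equiv.Perm.iterate_eq_pow] using this
      have hmp_pos : 0 < minimalPeriod ⇑ψ i₀ := perm_mp_pos ψ i₀
      have hp : ∀ j, p j ↔ p (ψ j) := by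
        intro j
        constructor
        · rintro ⟨k, rfl⟩
          exact ⟨k + 1, by rw [pow_succ', Equiv.Perm.mul_apply]⟩
        · rintro ⟨k, hk⟩
          refine ⟨k + minimalPeriod ⇑ψ i₀ - 1, ?_⟩
          apply ψ.injective
          rw [← hk]
          have h1 : k + minimalPeriod ⇑ψ i₀ - 1 + 1 = k + minimalPeriod ⇑ψ i₀ := by omega
          calc ψ ((ψ ^ (k + minimalPeriod ⇑ψ i₀ - 1)) i₀)
              = (ψ ^ (k + minimalPeriod ⇑ψ i₀ - 1 + 1)) i₀ := by
                rw [pow_succ', Equiv.Perm.mul_apply]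
            _ = (ψ ^ k) ((ψ ^ minimalPeriod ⇑ψ i₀) i₀) := by
                rw [h1, pow_add, Equiv.Perm.mul_apply]
            _ = (ψ ^ k) i₀ := by rw [hfix]
      set ψ₁ : Equiv.Perm {j // p j} := ψ.subtypePerm (fun j => (hp j).symm) with hψ₁
      set ψ₂ : Equiv.Perm {j // ¬ p j} := ψ.subtypePerm (fun j => not_congr (hp j).symm) with hψ₂
      set e : {j // p j} ⊕ {j // ¬ p j} ≃ I := Equiv.sumCompl p with he
      have hsemi : ∀ z, ψ (e z) = e ((Equiv.sumCongr ψ₁ ψ₂) z) := by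
        rintro (a | b) <;> rfl
      -- transitivity of ψ₁
      have hval : ∀ (k : ℕ) (a : {j // p j}), (((ψ₁ ^ k) a : {j // p j}) : I) = (ψ ^ k) ↑a := by
        intro k
        induction k with
        | zero => intro a; rfl
        | succ k ih =>
          intro a
          have h1 : (ψ₁ ^ (k + 1)) a = ψ₁ ((ψ₁ ^ k) a) := by
            rw [pow_succ', Equiv.Perm.mul_apply]
          have h2 : (ψ ^ (k + 1)) (a : I) = ψ ((ψ ^ k) ↑a) := by
            rw [pow_succ', Equiv.Perm.mul_apply]
          rw [h1, h2]
          show ψ (((ψ₁ ^ k) a : { j // p j }) : I) = ψ ((ψ ^ k) ↑a)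
          rw [ih a]
      have hi₀ : p i₀ := ⟨0, rfl⟩
      have htrans₁ : ∀ a : {j // p j}, ∃ k : ℕ, (ψ₁ ^ k) ⟨i₀, hi₀⟩ = a := by
        rintro ⟨j, ⟨k, rfl⟩⟩
        exact ⟨k, Subtype.ext (by rw [hval])⟩
      set m := Fintype.card {j // p j} with hm
      have hm_pos : 0 < m := Fintype.card_pos_iff.2 ⟨⟨i₀, hi₀⟩⟩
      have hm_le : m ≤ n := by
        rw [hm, ← hcard]
        exact Fintype.card_subtype_le p
      have hcard₂ : Fintype.card {j // ¬ p j} = n - m := by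
        rw [Fintype.card_subtype_compl, hcard, hm]
      -- CT factorization for each g
      have hW : ∀ g : I → ↥G, CT (W ψ (fun i => (g i : Equiv.Perm Ω)))
          = CT (W ψ₁ (fun a => (g ↑a : Equiv.Perm Ω)))
            * CT (W ψ₂ (fun b => (g ↑b : Equiv.Perm Ω))) := by
        intro g
        have s1 : CT (W ψ (fun i => (g i : Equiv.Perm Ω)))
            = CT (W (Equiv.sumCongr ψ₁ ψ₂) (fun z => (g (e z) : Equiv.Perm Ω))) := by
          apply CT_semiconj (Equiv.prodCongr (Equiv.refl Ω) e)
          rintro ⟨x, z⟩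
          show ((fun i => (g i : Equiv.Perm Ω)) (ψ (e z)) x, ψ (e z))
            = (((fun z => (g (e z) : Equiv.Perm Ω)) ((Equiv.sumCongr ψ₁ ψ₂) z)) x,
                e ((Equiv.sumCongr ψ₁ ψ₂) z))
          rw [hsemi z]
        have s2 : CT (W (Equiv.sumCongr ψ₁ ψ₂) (fun z => (g (e z) : Equiv.Perm Ω)))
            = CT (W ψ₁ (fun a => (g ↑a : Equiv.Perm Ω)))
              * CT (W ψ₂ (fun b => (g ↑b : Equiv.Perm Ω))) := by
          rw [← CT_sumCongr]
          apply CT_semiconj ((Equiv.prodSumDistrib Ω {j // p j} {j // ¬ p j}).symm)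
          rintro (⟨x, a⟩ | ⟨x, b⟩) <;> rfl
        rw [s1, s2]
      -- split the sum over g
      set EE : (I → ↥G) ≃ ({j // p j} → ↥G) × ({j // ¬ p j} → ↥G) :=
        Equiv.piEquivPiSubtypeProd p (fun _ => ↥G) with hEE
      have hrestr1 : ∀ (q : ({j // p j} → ↥G) × ({j // ¬ p j} → ↥G)) (a : {j // p j}),
          (EE.symm q) ↑a = q.1 a := by
        intro q a
        simp [hEE, Equiv.piEquivPiSubtypeProd, a.2]
      have hrestr2 : ∀ (q : ({j // p j} → ↥G) × ({j // ¬ p j} → ↥G)) (b : {j // ¬ p j}),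
          (EE.symm q) ↑b = q.2 b := by
        intro q b
        simp [hEE, Equiv.piEquivPiSubtypeProd, b.2]
      have hsplit : ∑ g : I → ↥G, CT (W ψ (fun i => (g i : Equiv.Perm Ω)))
          = (∑ g₁ : {j // p j} → ↥G, CT (W ψ₁ (fun a => (g₁ a : Equiv.Perm Ω))))
            * (∑ g₂ : {j // ¬ p j} → ↥G, CT (W ψ₂ (fun b => (g₂ b : Equiv.Perm Ω)))) := by
        rw [Finset.sum_congr rfl (fun g _ => hW g),
          ← Equiv.sum_comp EE.symm (fun g => CT (W ψ₁ (fun a => (g ↑a : Equiv.Perm Ω)))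
            * CT (W ψ₂ (fun b => (g ↑b : Equiv.Perm Ω)))), Fintype.sum_prod_type,
          Fintype.sum_mul_sum]
        refine Finset.sum_congr rfl fun g₁ _ => Finset.sum_congr rfl fun g₂ _ => ?_
        have e1 : (fun a : {j // p j} => ((EE.symm (g₁, g₂)) ↑a : Equiv.Perm Ω))
            = fun a => (g₁ a : Equiv.Perm Ω) := funext fun a => by rw [hrestr1]
        have e2 : (fun b : {j // ¬ p j} => ((EE.symm (g₁, g₂)) ↑b : Equiv.Perm Ω))
            = fun b => (g₂ b : Equiv.Perm Ω) := funext fun b => by rw [hrestr2]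
        rw [e1, e2]
      rw [hsplit, keyB G {j // p j} ψ₁ ⟨i₀, hi₀⟩ htrans₁,
        IH (n - m) (by omega) {j // ¬ p j} hcard₂ ψ₂, smul_mul_smul_comm, ← pow_add, ← hm]
      have hnm : m + (n - m) = n := by omega
      rw [hnm]
      congr 1
      -- product bookkeeping
      have hmem : m ∈ Finset.Icc 1 n := Finset.mem_Icc.2 ⟨hm_pos, hm_le⟩
      have hcyc : ∀ ℓ, 1 ≤ ℓ → cycCount ψ ℓ
          = (if ℓ = m then 1 else 0) + cycCount ψ₂ ℓ := by
        intro ℓ hℓ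
        rw [cycCount_semiconj e hsemi ℓ, cycCount_sumCongr _ _ hℓ,
          cycCount_of_trans ψ₁ ⟨i₀, hi₀⟩ htrans₁, ← hm]
      have hprod : ∏ ℓ ∈ Finset.Icc 1 n,
            (rename (fun j => j * ℓ) (CI (G : Set (Equiv.Perm Ω)))) ^ cycCount ψ ℓ
          = (rename (fun j => j * m) (CI (G : Set (Equiv.Perm Ω))))
            * ∏ ℓ ∈ Finset.Icc 1 (n - m),
              (rename (fun j => j * ℓ) (CI (G : Set (Equiv.Perm Ω)))) ^ cycCount ψ₂ ℓ := by
        have step1 : ∀ ℓ ∈ Finset.Icc 1 n,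
            (rename (fun j => j * ℓ) (CI (G : Set (Equiv.Perm Ω)))) ^ cycCount ψ ℓ
            = (if ℓ = m then (rename (fun j => j * ℓ) (CI (G : Set (Equiv.Perm Ω)))) else 1)
              * (rename (fun j => j * ℓ) (CI (G : Set (Equiv.Perm Ω)))) ^ cycCount ψ₂ ℓ := by
          intro ℓ hℓ
          rw [hcyc ℓ (Finset.mem_Icc.1 hℓ).1, pow_add]
          by_cases h : ℓ = m <;> simp [h]
        rw [Finset.prod_congr rfl step1, Finset.prod_mul_distrib,
          Finset.prod_ite_eq' (Finset.Icc 1 n) m, if_pos hmem]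
        congr 1
        refine (Finset.prod_subset (Finset.Icc_subset_Icc_right (by omega)) ?_).symm
        intro ℓ hℓ hℓ'
        simp only [Finset.mem_Icc] at hℓ hℓ'
        have hlt : n - m < ℓ := by omega
        rw [cycCount_eq_zero_of_lt ψ₂ (by rwa [Nat.card_eq_fintype_card, hcard₂]), pow_zero]
      rw [hprod]

lemma wreath_eq_W {Ω : Type*} (d : ℕ) (ψ : Equiv.Perm (Fin d)) (g : Fin d → Equiv.Perm Ω) :
    wreath d ψ g = W ψ g := rfl

lemma finsum_mem_subgroup {M : Type*} [Group M] (P : Subgroup M) [Fintype ↥P]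
    (f : M → MvPolynomial ℕ ℚ) : ∑ᶠ x ∈ (P : Set M), f x = ∑ x : ↥P, f ↑x := by
  classical
  rw [finsum_mem_eq_toFinset_sum f (P : Set M)]
  exact Finset.sum_subtype _ (fun x => by simp [Set.mem_toFinset]) f

/-- Pólya's theorem: the cycle index of the imprimitive wreath product `G ≀ P` of
permutation groups `G ≤ Sym(Ω)` and `P ≤ Sym(d)` equals the cycle index of `P` with each
variable `x_m` replaced by `CI^{(m)}(G)` (the cycle index of `G` with each `x_ℓ`
replaced by `x_{ℓ·m}`). -/
theorem stmt5 {Ω : Type*} [Fintype Ω] [Nonempty Ω] (d : ℕ) (hd : 0 < d)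
    (G : Subgroup (Equiv.Perm Ω)) (P : Subgroup (Equiv.Perm (Fin d))) :
    ((Nat.card P : ℚ) * (Nat.card G : ℚ) ^ d)⁻¹ •
        ∑ᶠ ψ ∈ (P : Set (Equiv.Perm (Fin d))),
          ∑ᶠ g : Fin d → G, CT (wreath d ψ (fun i => (g i : Equiv.Perm Ω)))
      = MvPolynomial.bind₁
          (fun ℓ => MvPolynomial.rename (fun j => j * ℓ) (CI (G : Set (Equiv.Perm Ω))))
          (CI (P : Set (Equiv.Perm (Fin d)))) := by

  classical
  have instG : Fintype ↥G := Fintype.ofFinite ↥G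
  have instP : Fintype ↥P := Fintype.ofFinite ↥P
  set c : ℚ := (Nat.card ↥G : ℚ) with hc
  set R : ℕ → MvPolynomial ℕ ℚ :=
    fun ℓ => rename (fun j => j * ℓ) (CI (G : Set (Equiv.Perm Ω))) with hR
  have hcpos : 0 < Nat.card ↥G := Nat.card_pos
  have hcne : c ≠ 0 := by
    rw [hc]
    exact_mod_cast hcpos.ne'
  have hPpos : 0 < Nat.card ↥P := Nat.card_pos
  have hPne : (Nat.card ↥P : ℚ) ≠ 0 := by exact_mod_cast hPpos.ne'
  -- left side
  have hkey : ∀ ψ : Equiv.Perm (Fin d),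
      ∑ g : Fin d → ↥G, CT (W ψ (fun i => (g i : Equiv.Perm Ω)))
        = (c ^ d) • ∏ ℓ ∈ Finset.Icc 1 d, (R ℓ) ^ cycCount ψ ℓ := by
    intro ψ
    have := key G d (Fin d) (by simp) ψ
    rw [this]
  have houter : (∑ᶠ ψ ∈ (P : Set (Equiv.Perm (Fin d))),
        ∑ᶠ g : Fin d → ↥G, CT (wreath d ψ (fun i => (g i : Equiv.Perm Ω))))
      = ∑ ψ : ↥P, (c ^ d) • ∏ ℓ ∈ Finset.Icc 1 d,
          (R ℓ) ^ cycCount (ψ : Equiv.Perm (Fin d)) ℓ := by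
    rw [finsum_mem_subgroup P]
    refine Finset.sum_congr rfl fun ψ _ => ?_
    rw [← hkey]
    rw [finsum_eq_sum_of_fintype]
    rfl
  rw [houter, ← Finset.smul_sum, smul_smul]
  have harith : ((Nat.card ↥P : ℚ) * c ^ d)⁻¹ * c ^ d = (Nat.card ↥P : ℚ)⁻¹ := by
    rw [mul_inv, mul_assoc, inv_mul_cancel₀ (pow_ne_zero d hcne), mul_one]
  rw [harith]
  -- right side
  have hCIP : CI (P : Set (Equiv.Perm (Fin d)))
      = (Nat.card ↥P : ℚ)⁻¹ • ∑ ψ : ↥P, CT (ψ : Equiv.Perm (Fin d)) := by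
    rw [CI, finsum_mem_subgroup P CT]
    rfl
  rw [hCIP, map_smul, map_sum]
  congr 1
  refine Finset.sum_congr rfl fun ψ _ => ?_
  rw [CT, map_prod]
  have hd' : Nat.card (Fin d) = d := by simp
  rw [hd']
  refine Finset.prod_congr rfl fun ℓ _ => ?_
  rw [map_pow, bind₁_X_right]
end

section
/- Let p be a prime, k a positive integer, a ∈ (ℤ/p^kℤ)ˣ and b ∈ ℤ/p^kℤ, and let A := λ(a,b) be the permutation x ↦ ax+b of ℤ/p^kℤ. Then the order of A as a permutation equals ord(a)·addord(b·(1 + a + a² + ⋯ + a^{ord(a)−1})), where ord(a) is the multiplicative order of a and addord denotes the additive order in ℤ/p^kℤ (with addord(0) = 1). -/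
/-- The affine permutation `λ(a,b) : x ↦ a·x + b` of `ZMod m`, for a unit `a` and an
element `b`. -/
def affinePerm (m : ℕ) (a : (ZMod m)ˣ) (b : ZMod m) : Equiv.Perm (ZMod m) where
  toFun x := (a : ZMod m) * x + b
  invFun x := ((a⁻¹ : (ZMod m)ˣ) : ZMod m) * (x - b)
  left_inv x := by
    show (a⁻¹ : (ZMod m)ˣ) * ((a : ZMod m) * x + b - b) = x
    rw [add_sub_cancel_right, ← mul_assoc, Units.inv_mul, one_mul]
  right_inv x := by
    show (a : ZMod m) * ((a⁻¹ : (ZMod m)ˣ) * (x - b)) + b = x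
    rw [← mul_assoc, Units.mul_inv, one_mul, sub_add_cancel]

lemma affinePerm_pow_apply (m : ℕ) (a : (ZMod m)ˣ) (b : ZMod m) :
    ∀ (t : ℕ) (x : ZMod m), ((affinePerm m a b) ^ t) x
      = (a : ZMod m) ^ t * x + b * ∑ j ∈ Finset.range t, (a : ZMod m) ^ j
  | 0, x => by simp
  | (t+1), x => by
    rw [pow_succ, Equiv.Perm.mul_apply, affinePerm_pow_apply m a b t, Finset.sum_range_succ]
    show (a : ZMod m) ^ t * ((a : ZMod m) * x + b) + _ = _
    ring

lemma geom_sum_mul_of_pow_eq_one {R : Type*} [CommRing R] (x : R) (n : ℕ)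
    (h : x ^ n = 1) (m : ℕ) :
    ∑ j ∈ Finset.range (n * m), x ^ j = (m : R) * ∑ j ∈ Finset.range n, x ^ j := by
  induction m with
  | zero => simp
  | succ m ih =>
    rw [Nat.mul_succ, Finset.sum_range_add, ih]
    have hx : ∀ j, x ^ (n * m + j) = x ^ j := fun j => by
      rw [pow_add, pow_mul, h, one_pow, one_mul]
    simp_rw [hx]
    push_cast
    ring

/-- The order of the affine permutation `λ(a,b)` of `ℤ/p^kℤ` equals
`ord(a) · addord(b·(1 + a + a² + ⋯ + a^{ord(a)−1}))`. -/
theorem stmt7 (p : ℕ) (hp : p.Prime) (k : ℕ) (hk : 0 < k)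
    (a : (ZMod (p ^ k))ˣ) (b : ZMod (p ^ k)) :
    orderOf (affinePerm (p ^ k) a b)
      = orderOf a *
        addOrderOf (b * ∑ j ∈ Finset.range (orderOf a), (a : ZMod (p ^ k)) ^ j) := by
  haveI : NeZero (p ^ k) := ⟨pow_ne_zero k hp.ne_zero⟩
  set n := orderOf a with hn
  set S := ∑ j ∈ Finset.range n, (a : ZMod (p ^ k)) ^ j with hS
  set d := addOrderOf (b * S) with hd
  have han : (a : ZMod (p ^ k)) ^ n = 1 := by
    rw [← Units.val_pow_eq_pow_val, hn, pow_orderOf_eq_one a, Units.val_one]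
  have key : ∀ t, (affinePerm (p ^ k) a b) ^ t = 1 ↔
      ((a : ZMod (p ^ k)) ^ t = 1 ∧
        b * ∑ j ∈ Finset.range t, (a : ZMod (p ^ k)) ^ j = 0) := by
    intro t
    constructor
    · intro h
      have h0 := Equiv.ext_iff.mp h 0
      have h1 := Equiv.ext_iff.mp h 1
      rw [affinePerm_pow_apply] at h0 h1
      simp only [mul_zero, zero_add, mul_one, Equiv.Perm.one_apply] at h0 h1
      rw [h0, add_zero] at h1
      exact ⟨h1, h0⟩
    · rintro ⟨h1, h0⟩
      ext x
      rw [affinePerm_pow_apply, h1, one_mul, h0, add_zero, Equiv.Perm.one_apply]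
  apply Nat.dvd_antisymm
  · apply orderOf_dvd_of_pow_eq_one
    rw [key]
    refine ⟨by rw [pow_mul, han, one_pow], ?_⟩
    rw [geom_sum_mul_of_pow_eq_one _ n han d, mul_left_comm, ← nsmul_eq_mul]
    exact addOrderOf_nsmul_eq_zero (b * S)
  · have h := pow_orderOf_eq_one (affinePerm (p ^ k) a b)
    rw [key] at h
    obtain ⟨h1, h0⟩ := h
    have hua : a ^ orderOf (affinePerm (p ^ k) a b) = 1 :=
      Units.ext (by rw [Units.val_pow_eq_pow_val]; exact h1)
    obtain ⟨m, hm⟩ := orderOf_dvd_of_pow_eq_one hua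
    rw [hm, geom_sum_mul_of_pow_eq_one _ n han m, mul_left_comm, ← nsmul_eq_mul] at h0
    have hdm : d ∣ m := addOrderOf_dvd_iff_nsmul_eq_zero.mpr h0
    exact hm ▸ mul_dvd_mul_left n hdm
end

section
/- Let p be an odd prime, k a positive integer, a ∈ (ℤ/p^kℤ)ˣ with a ≢ 1 (mod p), and b ∈ ℤ/p^kℤ; let σ := λ(a,b). Write ν := ν_p(ord(a)) for the p-adic valuation of the multiplicative order of a, and t := ord(a)/p^ν for the p'-part of ord(a) (note t > 1). Then for every positive integer ℓ, the number of x ∈ ℤ/p^kℤ with σ^ℓ(x) = x equals p^{k−ν+min(ν, ν_p(ℓ))} if t divides ℓ, and equals 1 if t does not divide ℓ. In particular, σ has exactly one fixed point. -/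
lemma card_mul_ker (n : ℕ) [NeZero n] (c : ℕ) :
    Nat.card {y : ZMod n // (c : ZMod n) * y = 0} = n.gcd c := by
  classical
  set f : ZMod n →+ ZMod n := AddMonoidHom.mulLeft (c : ZMod n) with hf
  have hrange : f.range = AddSubgroup.zmultiples ((c : ℕ) : ZMod n) := by
    ext y
    simp only [AddMonoidHom.mem_range, AddSubgroup.mem_zmultiples_iff]
    constructor
    · rintro ⟨x, rfl⟩
      refine ⟨(x.val : ℤ), ?_⟩
      simp [hf, ZMod.natCast_val, ZMod.cast_id, mul_comm]
    · rintro ⟨m, rfl⟩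
      exact ⟨(m : ZMod n), by simp [hf]; ring⟩
  have hcard2 : Nat.card f.range = addOrderOf ((c : ℕ) : ZMod n) := by
    rw [hrange, Nat.card_zmultiples]
  have horder : addOrderOf ((c : ℕ) : ZMod n) = n / n.gcd c :=
    ZMod.addOrderOf_coe c (NeZero.ne n)
  have hiso := Nat.card_congr (QuotientAddGroup.quotientKerEquivRange f).toEquiv
  have hlag := AddSubgroup.card_eq_card_quotient_mul_card_addSubgroup f.ker
  have hzn : Nat.card (ZMod n) = n := Nat.card_zmod n
  have hgcd_dvd : n.gcd c ∣ n := Nat.gcd_dvd_left n c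
  have hgpos : 0 < n.gcd c := Nat.gcd_pos_of_pos_left c (Nat.pos_of_ne_zero (NeZero.ne n))
  have hkercard : Nat.card f.ker = n.gcd c := by
    rw [hiso, hcard2, horder] at hlag
    rw [hzn] at hlag
    have hnd : 0 < n / n.gcd c :=
      Nat.div_pos (Nat.le_of_dvd (Nat.pos_of_ne_zero (NeZero.ne n)) hgcd_dvd) hgpos
    have : (n / n.gcd c) * Nat.card f.ker = (n / n.gcd c) * n.gcd c := by
      rw [← hlag, Nat.div_mul_cancel hgcd_dvd]
    exact Nat.eq_of_mul_eq_mul_left hnd this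
  rw [← hkercard]
  apply Nat.card_congr
  apply Equiv.subtypeEquivRight
  intro y
  simp [hf, AddMonoidHom.mem_ker, eq_comm]

lemma gcd_prime_pow (p : ℕ) (hp : p.Prime) (k M : ℕ) (hM : M ≠ 0) :
    Nat.gcd (p ^ k) M = p ^ min k (M.factorization p) := by
  have hg : Nat.gcd (p ^ k) M ∣ p ^ k := Nat.gcd_dvd_left _ _
  obtain ⟨j, hj, hje⟩ := (Nat.dvd_prime_pow hp).mp hg
  apply Nat.dvd_antisymm
  · rw [hje]
    apply pow_dvd_pow
    refine le_min hj ?_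
    rw [← hp.pow_dvd_iff_le_factorization hM]
    exact hje ▸ Nat.gcd_dvd_right _ _
  · apply Nat.dvd_gcd
    · exact pow_dvd_pow p (min_le_left _ _)
    · rw [hp.pow_dvd_iff_le_factorization hM]; exact min_le_right _ _

/-- rest below -/
theorem stmt8 (p : ℕ) (hp : p.Prime) (hodd : Odd p) (k : ℕ) (hk : 0 < k)
    (a : (ZMod (p ^ k))ˣ)
    (ha : ZMod.castHom (dvd_pow_self p hk.ne') (ZMod p) (a : ZMod (p ^ k)) ≠ 1)
    (b : ZMod (p ^ k)) :
    (∀ ℓ : ℕ, 0 < ℓ →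
      Nat.card {x : ZMod (p ^ k) // ((affinePerm (p ^ k) a b) ^ ℓ) x = x}
        = if (orderOf a) / p ^ ((orderOf a).factorization p) ∣ ℓ then
            p ^ (k - (orderOf a).factorization p
                + min ((orderOf a).factorization p) (ℓ.factorization p))
          else 1) ∧
    Nat.card {x : ZMod (p ^ k) // (affinePerm (p ^ k) a b) x = x} = 1 := by
  haveI : Fact p.Prime := ⟨hp⟩
  haveI : NeZero (p ^ k) := ⟨pow_ne_zero k hp.pos.ne'⟩
  set A := (a : ZMod (p ^ k)).val with hA
  have hAcast : ((A : ℕ) : ZMod (p ^ k)) = (a : ZMod (p ^ k)) := by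
    rw [hA, ZMod.natCast_val, ZMod.cast_id]
  have hunit : IsUnit ((A : ℕ) : ZMod (p ^ k)) := hAcast ▸ a.isUnit
  have hcop : A.Coprime (p ^ k) := (ZMod.isUnit_iff_coprime A (p ^ k)).mp hunit
  have hpA : ¬ p ∣ A := by
    intro hdvd
    have h1 : p ∣ Nat.gcd A (p ^ k) := Nat.dvd_gcd hdvd (dvd_pow_self p hk.ne')
    rw [hcop] at h1
    have h2 := Nat.le_of_dvd one_pos h1
    have := hp.two_le
    omega
  have hA1 : 1 ≤ A := by
    rcases Nat.eq_zero_or_pos A with h | h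
    · exact absurd (h ▸ dvd_zero p) hpA
    · exact h
  -- a ≢ 1 mod p
  have hA2 : ¬ p ∣ A - 1 := by
    intro hdvd
    apply ha
    have h1 : (A : ZMod p) = 1 := by
      have h0 := ((Nat.modEq_iff_dvd' hA1).mpr hdvd).symm
      have h2 := (ZMod.natCast_eq_natCast_iff A 1 p).mpr h0
      simpa using h2
    rw [← hAcast, map_natCast]
    exact h1
  have hA2' : 2 ≤ A := by
    rcases eq_or_lt_of_le hA1 with h | h
    · exfalso; apply hA2; rw [← h]; simp
    · exact h
  have horder : ∀ m : ℕ, (orderOf a ∣ m ↔ p ^ k ∣ A ^ m - 1) := by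
    intro m
    rw [orderOf_dvd_iff_pow_eq_one, ← Units.val_eq_one, Units.val_pow_eq_pow_val,
      ← hAcast, ← Nat.cast_pow, show (1 : ZMod (p ^ k)) = ((1 : ℕ) : ZMod (p ^ k)) by simp,
      ZMod.natCast_eq_natCast_iff]
    have h1 : 1 ≤ A ^ m := Nat.one_le_pow _ _ (by omega)
    constructor
    · intro h; exact (Nat.modEq_iff_dvd' h1).mp h.symm
    · intro h; exact ((Nat.modEq_iff_dvd' h1).mpr h).symm
  set d := orderOf a with hd
  have hd0 : d ≠ 0 := (orderOf_pos a).ne'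
  set ν := d.factorization p with hν
  set t := d / p ^ ν with ht
  have hdtp : p ^ ν * t = d := Nat.ordProj_mul_ordCompl_eq_self d p
  have hpt : ¬ p ∣ t := Nat.not_dvd_ordCompl hp hd0
  have ht0 : t ≠ 0 := by intro h; rw [h, mul_zero] at hdtp; exact hd0 hdtp.symm
  have hfactpow : ∀ j : ℕ, (p ^ j).factorization p = j := by
    intro j; rw [hp.factorization_pow]; simp
  have hpow_ne : ∀ m : ℕ, m ≠ 0 → A ^ m - 1 ≠ 0 := by
    intro m hm
    have := Nat.one_lt_pow hm hA2'
    omega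
  have lte : ∀ B s : ℕ, 2 ≤ B → ¬ p ∣ B → p ∣ B - 1 → s ≠ 0 →
      (B ^ s - 1).factorization p = (B - 1).factorization p + s.factorization p := by
    intro B s hB hpB hpB1 hs
    have h := padicValNat.pow_sub_pow (p := p) hodd (x := B) (y := 1) (by omega) hpB1 hpB hs
    rw [one_pow] at h
    rw [Nat.factorization_def _ hp, Nat.factorization_def _ hp, Nat.factorization_def _ hp]
    exact h
  have hcastp : ∀ m : ℕ, (p ∣ A ^ m - 1 ↔ (A : ZMod p) ^ m = 1) := by
    intro m
    rw [← Nat.cast_pow, show (1 : ZMod p) = ((1 : ℕ) : ZMod p) by simp,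
      ZMod.natCast_eq_natCast_iff]
    have h1 : 1 ≤ A ^ m := Nat.one_le_pow _ _ (by omega)
    constructor
    · intro h; exact ((Nat.modEq_iff_dvd' h1).mpr h).symm
    · intro h; exact (Nat.modEq_iff_dvd' h1).mp h.symm
  have hpt1 : p ∣ A ^ t - 1 := by
    rw [hcastp]
    have h1 : p ^ k ∣ A ^ d - 1 := (horder d).mp dvd_rfl
    have h2 : (A : ZMod p) ^ d = 1 := (hcastp d).mp (dvd_trans (dvd_pow_self p hk.ne') h1)
    calc (A : ZMod p) ^ t = ((A : ZMod p) ^ t) ^ (p ^ ν) := (ZMod.pow_card_pow _).symm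
    _ = (A : ZMod p) ^ d := by rw [← pow_mul, mul_comm t (p ^ ν), hdtp]
    _ = 1 := h2
  have hApt : ¬ p ∣ A ^ t := fun h => hpA (hp.dvd_of_dvd_pow h)
  have hAt2 : 2 ≤ A ^ t := by
    have := Nat.one_lt_pow ht0 hA2'
    omega
  have hE : ∀ ℓ : ℕ, ℓ ≠ 0 → (p ∣ A ^ ℓ - 1 ↔ t ∣ ℓ) := by
    intro ℓ hℓ
    constructor
    · intro hdvd
      have hne : A ^ ℓ - 1 ≠ 0 := hpow_ne ℓ hℓ
      have h1 : 1 ≤ (A ^ ℓ - 1).factorization p := by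
        rw [← hp.pow_dvd_iff_le_factorization hne, pow_one]; exact hdvd
      have hB2 : 2 ≤ A ^ ℓ := by
        have := Nat.one_lt_pow hℓ hA2'
        omega
      have h2 : ((A ^ ℓ) ^ (p ^ (k - 1)) - 1).factorization p
          = (A ^ ℓ - 1).factorization p + (p ^ (k - 1)).factorization p :=
        lte (A ^ ℓ) (p ^ (k - 1)) hB2 (fun h => hpA (hp.dvd_of_dvd_pow h))
          hdvd (pow_ne_zero _ hp.pos.ne')
      have h4 : p ^ k ∣ A ^ (ℓ * p ^ (k - 1)) - 1 := by
        rw [hp.pow_dvd_iff_le_factorization (hpow_ne _ (Nat.mul_ne_zero hℓ (pow_ne_zero _ hp.pos.ne'))), pow_mul, h2,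
          hfactpow]
        omega
      have h5 : d ∣ ℓ * p ^ (k - 1) := (horder _).mpr h4
      have h6 : t ∣ ℓ * p ^ (k - 1) := dvd_trans ⟨p ^ ν, by rw [← hdtp, mul_comm]⟩ h5
      have hcoprime : t.Coprime (p ^ (k - 1)) :=
        Nat.Coprime.pow_right _ (hp.coprime_iff_not_dvd.mpr hpt).symm
      exact hcoprime.dvd_of_dvd_mul_right h6
    · rintro ⟨s, rfl⟩
      exact dvd_trans hpt1 (by simpa [pow_mul] using Nat.sub_dvd_pow_sub_pow (A ^ t) 1 s)
  set m := (A ^ t - 1).factorization p with hmdef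
  have hval_d : (A ^ d - 1).factorization p = m + ν := by
    have h := lte (A ^ t) (p ^ ν) hAt2 hApt hpt1 (pow_ne_zero _ hp.pos.ne')
    rw [← pow_mul, mul_comm t (p ^ ν), hdtp] at h
    rw [h, hfactpow]
  have hkmν : k ≤ m + ν := by
    have h1 : p ^ k ∣ A ^ d - 1 := (horder d).mp dvd_rfl
    rw [hp.pow_dvd_iff_le_factorization (hpow_ne d hd0), hval_d] at h1
    exact h1
  have hν_cases : (ν = 0 ∧ k ≤ m) ∨ (m + ν = k) := by
    rcases Nat.eq_zero_or_pos ν with h0 | h0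
    · left; exact ⟨h0, by omega⟩
    · right
      have hnd : ¬ d ∣ t * p ^ (ν - 1) := by
        intro hdvd
        rw [← hdtp] at hdvd
        rw [mul_comm (p ^ ν) t] at hdvd
        have h1 : p ^ ν ∣ p ^ (ν - 1) :=
          (Nat.mul_dvd_mul_iff_left (Nat.pos_of_ne_zero ht0)).mp hdvd
        have h3 := (Nat.pow_dvd_pow_iff_le_right hp.one_lt).mp h1
        omega
      have h2 : ¬ p ^ k ∣ A ^ (t * p ^ (ν - 1)) - 1 := fun h => hnd ((horder _).mpr h)
      have h3 : (A ^ (t * p ^ (ν - 1)) - 1).factorization p = m + (ν - 1) := by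
        have h := lte (A ^ t) (p ^ (ν - 1)) hAt2 hApt hpt1 (pow_ne_zero _ hp.pos.ne')
        rw [← pow_mul] at h
        rw [h, hfactpow]
      rw [hp.pow_dvd_iff_le_factorization (hpow_ne _ (Nat.mul_ne_zero ht0 (pow_ne_zero _ hp.pos.ne'))), h3] at h2
      omega
  -- fixed point machinery
  have hC : IsUnit (1 - (a : ZMod (p ^ k))) := by
    have hCcast : (((1 - (a : ZMod (p ^ k))).val : ℕ) : ZMod (p ^ k))
        = 1 - (a : ZMod (p ^ k)) := by
      rw [ZMod.natCast_val, ZMod.cast_id]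
    rw [← hCcast, ZMod.isUnit_iff_coprime]
    have hpC : ¬ p ∣ (1 - (a : ZMod (p ^ k))).val := by
      intro hdvd
      have h0 : (((1 - (a : ZMod (p ^ k))).val : ℕ) : ZMod p) = 0 :=
        (ZMod.natCast_eq_zero_iff _ p).mpr hdvd
      have h1 : ZMod.castHom (dvd_pow_self p hk.ne') (ZMod p)
          ((((1 - (a : ZMod (p ^ k))).val : ℕ)) : ZMod (p ^ k)) = 0 := by
        rw [map_natCast]; exact h0
      rw [hCcast, map_sub, map_one] at h1
      exact ha (sub_eq_zero.mp h1).symm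
    exact Nat.Coprime.pow_right _ (hp.coprime_iff_not_dvd.mpr hpC).symm
  obtain ⟨u, hu⟩ := hC
  set x0 : ZMod (p ^ k) := (↑u⁻¹ : ZMod (p ^ k)) * b with hx0def
  have hx0 : (a : ZMod (p ^ k)) * x0 + b = x0 := by
    have h1 : (1 - (a : ZMod (p ^ k))) * x0 = b := by
      rw [hx0def, ← hu, ← mul_assoc, Units.mul_inv, one_mul]
    linear_combination -h1
  have hpow : ∀ (ℓ : ℕ) (x : ZMod (p ^ k)), ((affinePerm (p ^ k) a b) ^ ℓ) x
      = (a : ZMod (p ^ k)) ^ ℓ * (x - x0) + x0 := by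
    intro ℓ
    induction ℓ with
    | zero => intro x; simp
    | succ ℓ ih =>
      intro x
      rw [pow_succ', Equiv.Perm.mul_apply, ih]
      show (a : ZMod (p ^ k)) * ((a : ZMod (p ^ k)) ^ ℓ * (x - x0) + x0) + b = _
      linear_combination hx0
  have key : ∀ ℓ : ℕ, ℓ ≠ 0 →
      Nat.card {x : ZMod (p ^ k) // ((affinePerm (p ^ k) a b) ^ ℓ) x = x}
        = (p ^ k).gcd (A ^ ℓ - 1) := by
    intro ℓ hℓ
    have h1 : 1 ≤ A ^ ℓ := Nat.one_le_pow _ _ (by omega)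
    have hccast : ((A ^ ℓ - 1 : ℕ) : ZMod (p ^ k)) = (a : ZMod (p ^ k)) ^ ℓ - 1 := by
      rw [Nat.cast_sub h1, Nat.cast_pow, hAcast, Nat.cast_one]
    rw [← card_mul_ker (p ^ k) (A ^ ℓ - 1)]
    apply Nat.card_congr
    refine Equiv.subtypeEquiv (Equiv.subRight x0) (fun x => ?_)
    rw [hpow ℓ x, hccast]
    simp only [Equiv.subRight_apply]
    constructor
    · intro h; linear_combination h
    · intro h; linear_combination h
  have main : ∀ ℓ : ℕ, 0 < ℓ →
      Nat.card {x : ZMod (p ^ k) // ((affinePerm (p ^ k) a b) ^ ℓ) x = x}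
        = if t ∣ ℓ then p ^ (k - ν + min ν (ℓ.factorization p)) else 1 := by
    intro ℓ hℓ
    rw [key ℓ hℓ.ne']
    by_cases hdv : t ∣ ℓ
    · rw [if_pos hdv]
      have hne : A ^ ℓ - 1 ≠ 0 := hpow_ne ℓ hℓ.ne'
      rw [gcd_prime_pow p hp k _ hne]
      obtain ⟨s, rfl⟩ := hdv
      have hs0 : s ≠ 0 := by rintro rfl; simp at hℓ
      have hval : (A ^ (t * s) - 1).factorization p = m + s.factorization p := by
        have h := lte (A ^ t) s hAt2 hApt hpt1 hs0
        rw [← pow_mul] at h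
        exact h
      have hvℓ : (t * s).factorization p = s.factorization p := by
        rw [Nat.factorization_mul ht0 hs0]
        simp [Nat.factorization_eq_zero_of_not_dvd hpt]
      rw [hval, hvℓ]
      congr 1
      rcases hν_cases with ⟨h0, hkm⟩ | heq
      · rw [h0]; omega
      · omega
    · rw [if_neg hdv]
      have hnp : ¬ p ∣ A ^ ℓ - 1 := fun h => hdv ((hE ℓ hℓ.ne').mp h)
      exact Nat.Coprime.pow_left k (hp.coprime_iff_not_dvd.mpr hnp)
  refine ⟨main, ?_⟩
  have h1 := main 1 one_pos
  rw [pow_one] at h1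
  rw [h1, if_neg]
  intro hdvd
  have h2 := (hE 1 one_ne_zero).mpr hdvd
  rw [pow_one] at h2
  exact hA2 h2
end

section
/- Let p be an odd prime, k a positive integer, a ∈ (ℤ/p^kℤ)ˣ with a ≡ 1 (mod p), and b ∈ ℤ/p^kℤ with v(b) < v(a−1); let σ := λ(a,b). Then for every x ∈ ℤ/p^kℤ, the least positive integer n with σ^n(x) = x equals addord(b) = p^{k−v(b)}; that is, σ is a product of p^k/addord(b) disjoint cycles, each of length addord(b). -/
/-- `padicV p k c` is `v(c) = max{ j ∈ {0,…,k} : c ∈ p^j·(ℤ/p^kℤ) }`: it is `k` for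
`c = 0`, and the `p`-adic valuation of the canonical representative `c.val` otherwise. -/
def padicV (p k : ℕ) (c : ZMod (p ^ k)) : ℕ :=
  if c = 0 then k else (c.val).factorization p

lemma aux_dvd_iff (p k v : ℕ) (hp : p.Prime) (hodd : Odd p) (hvk : v < k)
    (A D : ℕ) (hA : 1 ≤ A) (hpA : p ^ (v+1) ∣ A - 1)
    (hDv : p ^ v ∣ D) (hDv1 : ¬ p ^ (v+1) ∣ D) (n : ℕ) :
    p ^ k ∣ (∑ i ∈ Finset.range n, A ^ i) * D ↔ p ^ (k - v) ∣ n := by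
  haveI : Fact p.Prime := ⟨hp⟩
  have hp1 : 1 < p := hp.one_lt
  have hD0 : D ≠ 0 := by rintro rfl; exact hDv1 (dvd_zero _)
  rcases Nat.eq_zero_or_pos n with rfl | hn
  · simp
  have hn0 : n ≠ 0 := hn.ne'
  set T := ∑ i ∈ Finset.range n, A ^ i with hT
  have hT1 : 1 ≤ T := by
    calc 1 = A ^ 0 := (pow_zero A).symm
    _ ≤ T := Finset.single_le_sum (fun i _ => Nat.zero_le _) (Finset.mem_range.2 hn)
  have hT0 : T ≠ 0 := by omega
  -- valuation of T equals valuation of n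
  have hvT : T.factorization p = n.factorization p := by
    rcases eq_or_lt_of_le hA with h1 | h2
    · simp [hT, ← h1]
    · -- A ≥ 2, use LTE
      have hA2 : 1 < A := h2
      have hA10 : A - 1 ≠ 0 := by omega
      have hpA1 : p ∣ A - 1 := dvd_trans (dvd_pow_self p (Nat.succ_ne_zero v)) hpA
      have hxp : ¬ p ∣ A := by
        intro h
        have : p ∣ A - (A - 1) := Nat.dvd_sub h hpA1
        rw [show A - (A - 1) = 1 by omega] at this
        have := Nat.dvd_one.1 this
        omega
      have hlte : padicValNat p (A ^ n - 1 ^ n) = padicValNat p (A - 1) + padicValNat p n :=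
        padicValNat.pow_sub_pow hodd hA2 (by simpa using hpA1) hxp hn0
      have hfac : A ^ n - 1 = (A - 1) * T := by
        have h1 : 1 ≤ A ^ n := Nat.one_le_pow _ _ (by omega)
        have hz := geom_sum_mul (A : ℤ) n
        have : ((A : ℤ) - 1) * (∑ i ∈ Finset.range n, (A : ℤ) ^ i) = (A : ℤ) ^ n - 1 := by
          rw [mul_comm]; exact hz
        rw [hT]
        zify [h1, hA]
        push_cast
        linarith [this]
      have hmul : padicValNat p ((A - 1) * T) = padicValNat p (A - 1) + padicValNat p T :=
        padicValNat.mul hA10 hT0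
      rw [one_pow, hfac, hmul] at hlte
      rw [Nat.factorization_def _ hp, Nat.factorization_def _ hp]
      omega
  have hvD : D.factorization p = v := by
    have h1 : v ≤ D.factorization p := (hp.pow_dvd_iff_le_factorization hD0).1 hDv
    have h2 : ¬ (v + 1 ≤ D.factorization p) := fun h => hDv1 ((hp.pow_dvd_iff_le_factorization hD0).2 h)
    omega
  have hTD0 : T * D ≠ 0 := Nat.mul_ne_zero hT0 hD0
  rw [hp.pow_dvd_iff_le_factorization hTD0, Nat.factorization_mul hT0 hD0,
    Finsupp.add_apply, hvT, hvD, hp.pow_dvd_iff_le_factorization hn0]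
  omega

/-- For `p` an odd prime, `a ≡ 1 (mod p)` a unit of `ℤ/p^kℤ` and `b` with
`v(b) < v(a−1)`, every point of `ℤ/p^kℤ` lies on a cycle of `σ = λ(a,b)` of length
exactly `addord(b) = p^{k−v(b)}`. -/
theorem stmt10 (p : ℕ) (hp : p.Prime) (hodd : Odd p) (k : ℕ) (hk : 0 < k)
    (a : (ZMod (p ^ k))ˣ)
    (ha : ZMod.castHom (dvd_pow_self p hk.ne') (ZMod p) (a : ZMod (p ^ k)) = 1)
    (b : ZMod (p ^ k))
    (hb : padicV p k b < padicV p k ((a : ZMod (p ^ k)) - 1)) :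
    (∀ x : ZMod (p ^ k),
      Function.minimalPeriod (fun y => (affinePerm (p ^ k) a b) y) x = addOrderOf b) ∧
    addOrderOf b = p ^ (k - padicV p k b) := by
  haveI : Fact p.Prime := ⟨hp⟩
  have hp1 : 1 < p := hp.one_lt
  have hpk : 1 < p ^ k := Nat.one_lt_pow hk.ne' hp1
  haveI : NeZero (p ^ k) := ⟨by omega⟩
  haveI : Fact (1 < p ^ k) := ⟨hpk⟩
  set v := padicV p k b with hv
  have hVle : ∀ c : ZMod (p ^ k), padicV p k c ≤ k := by
    intro c
    unfold padicV
    split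
    · exact le_rfl
    · rename_i hc
      have hcv : c.val ≠ 0 := fun h => hc ((ZMod.val_eq_zero c).1 h)
      have h1 : p ^ (c.val.factorization p) ∣ c.val := Nat.ordProj_dvd _ _
      have h2 : p ^ (c.val.factorization p) ≤ c.val := Nat.le_of_dvd (Nat.pos_of_ne_zero hcv) h1
      have h3 : c.val < p ^ k := ZMod.val_lt c
      exact le_of_lt ((Nat.pow_lt_pow_iff_right hp1).1 (lt_of_le_of_lt h2 h3))
  have hvk : v < k := lt_of_lt_of_le hb (hVle _)
  have hb0 : b ≠ 0 := by
    intro h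
    rw [hv] at hvk
    simp [padicV, h] at hvk
  have hB0 : b.val ≠ 0 := fun h => hb0 ((ZMod.val_eq_zero b).1 h)
  have hvB : v = (b.val).factorization p := by simp [hv, padicV, hb0]
  have hBv : p ^ v ∣ b.val := by rw [hvB]; exact Nat.ordProj_dvd _ _
  have hBv1 : ¬ p ^ (v+1) ∣ b.val := by
    rw [hp.pow_dvd_iff_le_factorization hB0]
    omega
  -- addOrderOf
  have hbb : ((b.val : ℕ) : ZMod (p^k)) = b := by simp [ZMod.natCast_val, ZMod.cast_id]
  have hgcd : Nat.gcd (p ^ k) b.val = p ^ v := by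
    obtain ⟨j, hj, hje⟩ := (Nat.dvd_prime_pow hp).1 (Nat.gcd_dvd_left (p^k) b.val)
    have hjv : j ≤ v := by
      have hd : p ^ j ∣ b.val := hje ▸ Nat.gcd_dvd_right _ _
      rw [hp.pow_dvd_iff_le_factorization hB0] at hd
      omega
    have hvj : p ^ v ∣ p ^ j := hje ▸ Nat.dvd_gcd (pow_dvd_pow p hvk.le) hBv
    have hvj' : v ≤ j := (Nat.pow_dvd_pow_iff_le_right hp1).1 hvj
    rw [hje]
    congr 1
    omega
  have hord : addOrderOf b = p ^ (k - v) := by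
    rw [← hbb, ZMod.addOrderOf_coe _ (NeZero.ne (p^k)), hgcd, Nat.pow_div hvk.le hp.pos]
  refine ⟨?_, hord⟩
  intro x
  set A := ((a : ZMod (p^k))).val with hA
  have ha0 : (a : ZMod (p^k)) ≠ 0 := a.ne_zero
  have hA1 : 1 ≤ A := Nat.pos_of_ne_zero (fun h => ha0 ((ZMod.val_eq_zero _).1 h))
  have hAcast : ((A : ℕ) : ZMod (p^k)) = (a : ZMod (p^k)) := by
    simp [hA, ZMod.natCast_val, ZMod.cast_id]
  have hpA : p ^ (v+1) ∣ A - 1 := by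
    by_cases h1 : (a : ZMod (p^k)) = 1
    · have : A = 1 := by rw [hA, h1, ZMod.val_one]
      simp [this]
    · have hne : (a : ZMod (p^k)) - 1 ≠ 0 := sub_ne_zero.2 h1
      have hw : padicV p k ((a : ZMod (p^k)) - 1) = ((a : ZMod (p^k)) - 1).val.factorization p := by
        simp [padicV, hne]
      have hval : ((a : ZMod (p^k)) - 1).val = A - 1 := by
        have he : (a : ZMod (p^k)) - 1 = ((A - 1 : ℕ) : ZMod (p^k)) := by
          rw [Nat.cast_sub hA1, hAcast, Nat.cast_one]
        rw [he, ZMod.val_cast_of_lt (by have := ZMod.val_lt (a : ZMod (p^k)); omega)]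
      have hne' : A - 1 ≠ 0 := by
        intro h
        have : A = 1 := by omega
        exact h1 (by rw [← hAcast, this, Nat.cast_one])
      rw [hp.pow_dvd_iff_le_factorization hne']
      rw [hw, hval] at hb
      omega
  set X := x.val with hX
  have hXcast : ((X : ℕ) : ZMod (p^k)) = x := by simp [hX, ZMod.natCast_val, ZMod.cast_id]
  set D := (A - 1) * X + b.val with hD
  have hDv : p ^ v ∣ D :=
    dvd_add (dvd_mul_of_dvd_left (dvd_trans (pow_dvd_pow p (Nat.le_succ v)) hpA) _) hBv
  have hDv1 : ¬ p ^ (v+1) ∣ D := by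
    intro h
    have h2 : p ^ (v+1) ∣ (A - 1) * X := dvd_mul_of_dvd_left hpA _
    have h3 : p ^ (v+1) ∣ D - (A - 1) * X := Nat.dvd_sub h h2
    rw [show D - (A - 1) * X = b.val by omega] at h3
    exact hBv1 h3
  set f := fun y => (affinePerm (p^k) a b) y with hfdef
  have hf : ∀ y, f y = (a : ZMod (p^k)) * y + b := fun y => rfl
  have hiter : ∀ n, f^[n] x =
      (a : ZMod (p^k))^n * x + (∑ i ∈ Finset.range n, (a : ZMod (p^k))^i) * b := by
    intro n
    induction n with
    | zero => simp
    | succ n ih =>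
      rw [Function.iterate_succ_apply', ih, hf, geom_sum_succ]
      ring
  have hper : ∀ n, f^[n] x = x ↔ p^(k-v) ∣ n := by
    intro n
    rw [hiter]
    set S := ∑ i ∈ Finset.range n, (a : ZMod (p^k))^i with hS
    have key : S * (((a : ZMod (p^k)) - 1) * x + b) =
        ((a : ZMod (p^k))^n * x + S * b) - x := by
      rw [mul_add, ← mul_assoc, geom_sum_mul]
      ring
    rw [← sub_eq_zero, ← key]
    have hcast : (((∑ i ∈ Finset.range n, A^i) * D : ℕ) : ZMod (p^k)) =
        S * (((a : ZMod (p^k)) - 1) * x + b) := by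
      rw [hD, hS]
      push_cast [Nat.cast_sub hA1]
      rw [hAcast, hXcast, hbb]
    rw [← hcast, ZMod.natCast_eq_zero_iff]
    exact aux_dvd_iff p k v hp hodd hvk A D hA1 hpA hDv hDv1 n
  have h1 : Function.IsPeriodicPt f (p^(k-v)) x := (hper _).2 dvd_rfl
  have h2 := h1.minimalPeriod_dvd
  have h3 := (hper _).1 (Function.isPeriodicPt_minimalPeriod f x)
  rw [hord]
  exact Nat.dvd_antisymm h2 h3
end

section
/- Let k ≥ 3 be an integer, a ∈ (ℤ/2^kℤ)ˣ with a ≡ 3 (mod 4), and let b ∈ ℤ/2^kℤ be odd (a unit). Then for every x ∈ ℤ/2^kℤ, the least positive integer n with (λ(a,b))^n(x) = x equals 2^{k+1−v(a+1)} (note that 2 ≤ v(a+1) ≤ k since 4 divides a+1); that is, λ(a,b) is a product of 2^{v(a+1)−1} disjoint cycles, each of length 2^{k+1−v(a+1)}. -/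
theorem key_int (v : ℕ) (hv : 2 ≤ v) (u₀ : ℤ) (hu₀ : Odd u₀) (α : ℤ) (hα : α = -1 + 2^v * u₀) :
    ∀ j : ℕ, 1 ≤ j → ∃ u w : ℤ, Odd u ∧ Odd w ∧
      α ^ (2^j) = 1 + 2^(v+j) * u ∧ (∑ i ∈ Finset.range (2^j), α ^ i) = 2^(v+j-1) * w := by
  intro j hj
  induction j with
  | zero => omega
  | succ j ih =>
    rcases Nat.eq_or_lt_of_le hj with h1 | h1
    · obtain ⟨t, rfl⟩ : ∃ t, v = t + 2 := ⟨v - 2, by omega⟩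
      refine ⟨-u₀ + 2^(t+1) * u₀^2, u₀, ?_, hu₀, ?_, ?_⟩
      · exact hu₀.neg.add_even (Even.mul_right ⟨2^t, by ring⟩ _)
      · rw [← h1, hα]
        have : t + 2 + 1 = t + 3 := rfl
        rw [this]; ring
      · rw [← h1]
        rw [show (2:ℕ)^1 = 2 from rfl, Finset.sum_range_succ, Finset.sum_range_one, hα]
        have : t + 2 + 1 - 1 = t + 2 := rfl
        rw [this]; ring
    · have hj' : 1 ≤ j := by omega
      obtain ⟨u, w, hu, hw, hpow, hsum⟩ := ih hj'
      obtain ⟨s, hs, hs1⟩ : ∃ s, v + j = s + 1 ∧ 1 ≤ s := ⟨v + j - 1, by omega, by omega⟩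
      have E1 : v + (j+1) = s + 2 := by omega
      have E3 : v + (j+1) - 1 = s + 1 := by omega
      have E4 : v + j - 1 = s := by omega
      rw [hs] at hpow; rw [E4] at hsum
      refine ⟨u + 2^s * u^2, w * (1 + 2^s * u), ?_, ?_, ?_, ?_⟩
      · exact hu.add_even (Even.mul_right ⟨2^(s-1), by rw [← two_mul, ← pow_succ', Nat.sub_add_cancel hs1]⟩ _)
      · exact hw.mul (odd_one.add_even (Even.mul_right ⟨2^(s-1), by rw [← two_mul, ← pow_succ', Nat.sub_add_cancel hs1]⟩ _))
      · have h2 : α ^ 2 ^ (j+1) = (α ^ 2^j)^2 := by rw [← pow_mul, pow_succ]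
        rw [E1, h2, hpow]; ring
      · have h2 : (2:ℕ)^(j+1) = 2^j + 2^j := by rw [pow_succ]; ring
        rw [E3, h2, Finset.sum_range_add]
        have : ∀ i ∈ Finset.range (2^j), α ^ (2^j + i) = α ^ (2^j) * α ^ i := fun i _ => pow_add α _ _
        rw [Finset.sum_congr rfl this, ← Finset.mul_sum, hsum, hpow]; ring

theorem affine_iter {m : ℕ} (a : (ZMod m)ˣ) (b : ZMod m) (n : ℕ) (x : ZMod m) :
    (fun y => (affinePerm m a b) y)^[n] x
      = (a : ZMod m)^n * x + (∑ i ∈ Finset.range n, (a : ZMod m)^i) * b := by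
  induction n with
  | zero => simp
  | succ n ih =>
    rw [Function.iterate_succ_apply', ih]
    show (a : ZMod m) * _ + b = _
    rw [geom_sum_succ]
    ring

/-- For `k ≥ 3`, `a ≡ 3 (mod 4)` a unit of `ℤ/2^kℤ` and `b` odd, every point of
`ℤ/2^kℤ` lies on a cycle of `λ(a,b)` of length exactly `2^{k+1−v(a+1)}`. -/
theorem stmt11 (k : ℕ) (hk : 3 ≤ k) (a : (ZMod (2 ^ k))ˣ)
    (ha : ZMod.castHom
        (show (4 : ℕ) ∣ 2 ^ k by
          have h4 : (2 : ℕ) ^ 2 ∣ 2 ^ k := pow_dvd_pow 2 (by omega)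
          norm_num at h4; exact h4)
        (ZMod 4) (a : ZMod (2 ^ k)) = 3)
    (b : ZMod (2 ^ k)) (hb : ¬ (2 : ZMod (2 ^ k)) ∣ b) :
    ∀ x : ZMod (2 ^ k),
      Function.minimalPeriod (fun y => (affinePerm (2 ^ k) a b) y) x
        = 2 ^ (k + 1 - padicV 2 k ((a : ZMod (2 ^ k)) + 1)) := by
  intro x
  have hm : (2:ℕ)^k ≠ 0 := by positivity
  haveI : NeZero ((2:ℕ)^k) := ⟨hm⟩
  set α : ℕ := (a : ZMod (2^k)).val with hαdef
  have hcast : ((α : ℕ) : ZMod (2^k)) = (a : ZMod (2^k)) := by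
    rw [hαdef, ZMod.natCast_val, ZMod.cast_id]
  have hαlt : α < 2^k := ZMod.val_lt _
  have hmod : α % 4 = 3 := by
    have h3 : ((α : ℕ) : ZMod 4) = 3 := by
      rw [hαdef, ZMod.natCast_val]; rw [ZMod.castHom_apply] at ha; exact ha
    have := ZMod.val_natCast (n := 4) α
    rw [h3] at this
    exact this.symm.trans (by decide)
  have h4 : 4 ∣ α + 1 := by omega
  set v : ℕ := (α+1).factorization 2 with hvdef
  have hv2 : 2 ≤ v := by
    rw [hvdef]
    refine (Nat.Prime.pow_dvd_iff_le_factorization Nat.prime_two (by omega)).mp ?_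
    norm_num; exact h4
  have hdvdv : 2^v ∣ α + 1 := Nat.ordProj_dvd _ _
  have hvk : v ≤ k := by
    have h1 : 2^v ≤ 2^k := le_trans (Nat.le_of_dvd (by omega) hdvdv) (by omega)
    exact (Nat.pow_le_pow_iff_right (by norm_num)).mp h1
  set u₀ : ℕ := (α+1) / 2^v with hu₀def
  have hfac : 2^v * u₀ = α + 1 := Nat.ordProj_mul_ordCompl_eq_self (α+1) 2
  have hu₀odd : Odd u₀ := by
    have h := Nat.not_dvd_ordCompl Nat.prime_two (show α + 1 ≠ 0 by omega)
    rw [← hvdef, ← hu₀def] at h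
    rw [Nat.odd_iff]; omega
  have hpad : padicV 2 k ((a : ZMod (2 ^ k)) + 1) = v := by
    by_cases hc : (a : ZMod (2 ^ k)) + 1 = 0
    · have hna : ((α + 1 : ℕ) : ZMod (2^k)) = 0 := by push_cast [hcast]; exact hc
      have hdvd : 2^k ∣ α + 1 := (ZMod.natCast_eq_zero_iff _ _).mp hna
      have heq : α + 1 = 2^k := le_antisymm (by omega) (Nat.le_of_dvd (by omega) hdvd)
      rw [padicV, if_pos hc, hvdef, heq]
      simp [Nat.Prime.factorization_pow, Nat.Prime.factorization_self Nat.prime_two]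
    · have hne : α + 1 ≠ 2^k := by
        intro h
        apply hc
        rw [← hcast]
        have : ((α + 1 : ℕ) : ZMod (2^k)) = 0 := by rw [h]; exact_mod_cast ZMod.natCast_self _
        push_cast at this
        exact this
      have hval : ((a : ZMod (2 ^ k)) + 1).val = α + 1 := by
        have : (a : ZMod (2 ^ k)) + 1 = ((α + 1 : ℕ) : ZMod (2^k)) := by push_cast [hcast]; ring
        rw [this, ZMod.val_natCast, Nat.mod_eq_of_lt (by omega)]
      rw [padicV, if_neg hc, hval]
  rw [hpad]
  -- move to ℤ
  set A : ℤ := (α : ℤ) with hAdef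
  have hA : A = -1 + 2^v * (u₀ : ℤ) := by
    have : ((2^v * u₀ : ℕ) : ℤ) = ((α + 1 : ℕ) : ℤ) := by rw [hfac]
    push_cast at this
    omega
  have hAc : ((A : ℤ) : ZMod (2^k)) = (a : ZMod (2^k)) := by
    rw [hAdef]; exact_mod_cast hcast
  have hu₀oddZ : Odd (u₀ : ℤ) := by exact_mod_cast hu₀odd
  have key := key_int v hv2 (u₀ : ℤ) hu₀oddZ A hA
  have hz : ∀ c : ℤ, ((2^k * c : ℤ) : ZMod (2^k)) = 0 := by
    intro c
    rw [ZMod.intCast_zmod_eq_zero_iff_dvd]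
    exact ⟨c, by push_cast; ring⟩
  set f := fun y => (affinePerm (2^k) a b) y with hfdef
  -- b has odd val
  have hBodd : Odd (b.val) := by
    rw [Nat.odd_iff]
    rcases Nat.even_or_odd b.val with he | ho
    · exfalso
      apply hb
      obtain ⟨c, hc⟩ := he
      have : b = ((b.val : ℕ) : ZMod (2^k)) := by rw [ZMod.natCast_val, ZMod.cast_id]
      rw [this, hc]
      exact ⟨(c : ZMod (2^k)), by push_cast; ring⟩
    · exact Nat.odd_iff.mp ho
  -- periodicity at N = 2^(k+1-v)
  have hNper : Function.IsPeriodicPt f (2^(k+1-v)) x := by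
    obtain ⟨u, w, hu, hw, hpow, hsum⟩ := key (k+1-v) (by omega)
    rw [show v + (k+1-v) = k+1 by omega] at hpow
    rw [show v + (k+1-v) - 1 = k by omega] at hsum
    show f^[2^(k+1-v)] x = x
    rw [hfdef, affine_iter]
    have e1 : ((a : ZMod (2^k)))^(2^(k+1-v)) = 1 := by
      rw [← hAc]
      rw [show ((A : ℤ) : ZMod (2^k))^(2^(k+1-v)) = ((A^(2^(k+1-v)) : ℤ) : ZMod (2^k)) by push_cast; ring]
      rw [hpow]
      push_cast
      rw [show ((2:ZMod (2^k)))^(k+1) * (u : ZMod (2^k)) = ((2^k * (2 * u) : ℤ) : ZMod (2^k)) by push_cast [pow_succ]; ring]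
      rw [hz]
      ring
    have e2 : (∑ i ∈ Finset.range (2^(k+1-v)), ((a : ZMod (2^k)))^i) = 0 := by
      rw [← hAc]
      rw [show (∑ i ∈ Finset.range (2^(k+1-v)), ((A : ℤ) : ZMod (2^k))^i)
            = (((∑ i ∈ Finset.range (2^(k+1-v)), A^i : ℤ)) : ZMod (2^k)) by push_cast; ring]
      rw [hsum]
      rw [show (((2^k * w : ℤ)) : ZMod (2^k)) = 0 from hz w]
    rw [e1, e2]
    ring
  -- non-periodicity at 2^(k-v)
  have hMne : ¬ Function.IsPeriodicPt f (2^(k-v)) x := by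
    rcases eq_or_lt_of_le hvk with hveq | hvlt
    · -- v = k : 2^(k-v) = 1
      rw [show k - v = 0 by omega]
      intro hcon
      have h1 : f x = x := hcon
      rw [hfdef] at h1
      have h1' : (a : ZMod (2^k)) * x + b = x := h1
      have hAodd : 2 ∣ (1 - A) := by
        refine ⟨(1 - A)/2, ?_⟩
        have : A % 2 = 1 := by
          rw [hAdef]; omega
        omega
      obtain ⟨c, hcc⟩ := hAodd
      apply hb
      refine ⟨((c : ℤ) : ZMod (2^k)) * x, ?_⟩
      have : b = (1 - (a : ZMod (2^k))) * x := by
        linear_combination h1'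
      rw [this, ← hAc]
      rw [show ((1:ZMod (2^k)) - ((A:ℤ) : ZMod (2^k))) = (((1 - A : ℤ)) : ZMod (2^k)) by push_cast; ring]
      rw [hcc]
      push_cast
      ring
    · -- v < k
      obtain ⟨u, w, hu, hw, hpow, hsum⟩ := key (k-v) (by omega)
      rw [show v + (k-v) = k by omega] at hpow
      rw [show v + (k-v) - 1 = k - 1 by omega] at hsum
      intro hcon
      have h1 : f^[2^(k-v)] x = x := hcon
      rw [hfdef, affine_iter] at h1
      have e1 : ((a : ZMod (2^k)))^(2^(k-v)) = 1 := by
        rw [← hAc]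
        rw [show ((A : ℤ) : ZMod (2^k))^(2^(k-v)) = ((A^(2^(k-v)) : ℤ) : ZMod (2^k)) by push_cast; ring]
        rw [hpow]
        push_cast
        rw [show ((2:ZMod (2^k)))^k * (u : ZMod (2^k)) = ((2^k * u : ℤ) : ZMod (2^k)) by push_cast; ring]
        rw [hz]
        ring
      have e2 : (∑ i ∈ Finset.range (2^(k-v)), ((a : ZMod (2^k)))^i)
            = ((2^(k-1) * w : ℤ) : ZMod (2^k)) := by
        rw [← hAc]
        rw [show (∑ i ∈ Finset.range (2^(k-v)), ((A : ℤ) : ZMod (2^k))^i)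
              = (((∑ i ∈ Finset.range (2^(k-v)), A^i : ℤ)) : ZMod (2^k)) by push_cast; ring]
        rw [hsum]
      rw [e1, e2, one_mul] at h1
      have h2 : ((2^(k-1) * w : ℤ) : ZMod (2^k)) * b = 0 := by
        have := congrArg (fun z => z - x) h1
        simpa using this
      -- rewrite b as cast of val
      have hbv : (((b.val : ℤ)) : ZMod (2^k)) = b := by
        exact_mod_cast (show ((b.val : ℕ) : ZMod (2^k)) = b by rw [ZMod.natCast_val, ZMod.cast_id])
      rw [← hbv] at h2
      rw [show ((2^(k-1) * w : ℤ) : ZMod (2^k)) * (((b.val : ℤ)) : ZMod (2^k))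
            = ((2^(k-1) * w * (b.val : ℤ) : ℤ) : ZMod (2^k)) by push_cast; ring] at h2
      rw [ZMod.intCast_zmod_eq_zero_iff_dvd] at h2
      have h3 : ((2:ℤ)^k) ∣ 2^(k-1) * w * (b.val : ℤ) := by exact_mod_cast h2
      rw [show (2:ℤ)^k = 2^(k-1) * 2 by rw [← pow_succ, Nat.sub_add_cancel (by omega)]] at h3
      have h5 : (2:ℤ) ∣ w * (b.val : ℤ) := by
        rcases h3 with ⟨c, hc⟩
        refine ⟨c, ?_⟩
        have h6 : (2:ℤ)^(k-1) ≠ 0 := by positivity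
        have : (2:ℤ)^(k-1) * (w * (b.val:ℤ)) = 2^(k-1) * (2 * c) := by linear_combination hc
        exact mul_left_cancel₀ h6 this
      have hodd : Odd (w * (b.val : ℤ)) := hw.mul (by exact_mod_cast hBodd)
      rcases h5 with ⟨c, hc⟩
      rcases hodd with ⟨t, ht⟩
      omega
  -- conclude
  have hd := hNper.minimalPeriod_dvd
  obtain ⟨i, hik, hmp⟩ := (Nat.dvd_prime_pow Nat.prime_two).mp hd
  rcases eq_or_lt_of_le hik with hieq | hilt
  · rw [hmp, hieq]
  · exfalso
    apply hMne
    have hper := Function.isPeriodicPt_minimalPeriod f x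
    have hdd : 2^(k-v) = Function.minimalPeriod f x * 2^(k-v-i) := by
      rw [hmp, ← pow_add]
      congr 1
      omega
    rw [hdd]
    exact hper.mul_const _
end
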